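/- arXiv:2001.03941 — 7 statements merged into one kernel-verified Lean document; each statement's English description precedes it below -/
import Mathlib

section
/- For any integer n ≥ 2, the sum over k from 0 to n of ((-n)_k (n-1)_k) / ((1)_k (1/2)_k) equals (-1)^(n-1)/(2n-1), where (a)_k denotes the Pochhammer symbol (rising factorial). -/
open Finset

/-- The Pochhammer symbol (rising factorial): (a)_0 = 1, (a)_k = a(a+1)⋯(a+k-1). -/
def poch (a : ℚ) : ℕ → ℚ
  | 0 => 1
  | k + 1 => poch a k * (a + k)

lemma poch_succ (a : ℚ) (k : ℕ) : poch a (k + 1) = poch a k * (a + k) := rfl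

lemma poch_shift (a : ℚ) : ∀ k : ℕ, poch a (k + 1) = a * poch (a + 1) k := by
  intro k
  induction k with
  | zero => simp [poch]
  | succ k ih =>
      rw [poch_succ, ih, poch_succ]
      push_cast
      ring

lemma poch_pos {a : ℚ} (ha : 0 < a) (k : ℕ) : 0 < poch a k := by
  induction k with
  | zero => norm_num [poch]
  | succ k ih =>
      rw [poch_succ]
      have : (0:ℚ) < a + k := by positivity
      positivity

/-- Auxiliary: term of the sum. -/
def T (n k : ℕ) : ℚ :=
  poch (-(n : ℚ)) k * poch ((n : ℚ) - 1) k / (poch 1 k * poch (1/2) k)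

/-- Auxiliary: WZ certificate function. -/
def Hh (n : ℕ) : ℕ → ℚ
  | 0 => 0
  | j + 1 => (2 * n * (j + 1) * (-(2 * (j : ℚ)) - 1)) / (((n : ℚ) - 1) * (2 * n - 1)) *
      (poch (-(n : ℚ)) j * poch ((n : ℚ) - 1) (j + 1)) / (poch 1 (j + 1) * poch (1/2) (j + 1))

lemma poch_neg_top (n : ℕ) : poch (-(n : ℚ)) (n + 1) = 0 := by
  rw [poch_succ]
  simp

lemma key (n : ℕ) (hn : 2 ≤ n) (k : ℕ) :
    -(2 * (n : ℚ) + 1) / (2 * (n : ℚ) - 1) * T (n + 1) k - T n k = Hh n (k + 1) - Hh n k := by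
  have hn1 : (n : ℚ) - 1 ≠ 0 := by
    have : (2:ℚ) ≤ (n:ℚ) := by exact_mod_cast hn
    intro h; nlinarith
  have h2n : 2 * (n : ℚ) - 1 ≠ 0 := by
    have : (2:ℚ) ≤ (n:ℚ) := by exact_mod_cast hn
    intro h; nlinarith
  cases k with
  | zero =>
      simp only [T, Hh, poch, Nat.cast_zero, Nat.cast_one]
      field_simp
      ring
  | succ j =>
      have hU : poch 1 j ≠ 0 := ne_of_gt (poch_pos one_pos j)
      have hV : poch (1/2) j ≠ 0 := ne_of_gt (poch_pos (by norm_num) j)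
      have hj1 : (1 : ℚ) + j ≠ 0 := by positivity
      have hj2 : (1 : ℚ)/2 + j ≠ 0 := by positivity
      have hj3 : (1 : ℚ) + (j+1:ℕ) ≠ 0 := by positivity
      have hj4 : (1 : ℚ)/2 + (j+1:ℕ) ≠ 0 := by positivity
      -- rewrite all poch's at level j+1, j+2 in terms of level j
      have e1 : poch (-((n:ℚ) + 1)) (j + 1) = (-((n:ℚ)+1)) * poch (-(n:ℚ)) j := by
        rw [poch_shift, show (-((n:ℚ)+1) + 1) = -(n:ℚ) by ring]
      have e2 : ((n:ℚ) - 1) * poch ((n:ℚ)) (j + 1)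
          = poch ((n:ℚ) - 1) j * ((n:ℚ) - 1 + j) * ((n:ℚ) + j) := by
        have := poch_shift ((n:ℚ) - 1) (j + 1)
        rw [show ((n:ℚ) - 1 + 1) = (n:ℚ) by ring] at this
        rw [← this, poch_succ, poch_succ]
        push_cast
        ring
      have e3 : poch (-(n:ℚ)) (j + 1) = poch (-(n:ℚ)) j * (-(n:ℚ) + j) := poch_succ _ _
      have e4 : poch ((n:ℚ) - 1) (j + 1) = poch ((n:ℚ) - 1) j * ((n:ℚ) - 1 + j) := poch_succ _ _
      have e5 : poch ((n:ℚ) - 1) (j + 2)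
          = poch ((n:ℚ) - 1) j * ((n:ℚ) - 1 + j) * ((n:ℚ) - 1 + (j+1:ℕ)) := by
        rw [poch_succ, poch_succ]
      have e6 : poch 1 (j + 1) = poch 1 j * (1 + j) := poch_succ _ _
      have e7 : poch 1 (j + 2) = poch 1 j * (1 + j) * (1 + (j+1:ℕ)) := by
        rw [poch_succ, poch_succ]
      have e8 : poch (1/2) (j + 1) = poch (1/2) j * (1/2 + j) := poch_succ _ _
      have e9 : poch (1/2) (j + 2) = poch (1/2) j * (1/2 + j) * (1/2 + (j+1:ℕ)) := by
        rw [poch_succ, poch_succ]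
      -- Qn = poch n (j+1); eliminate it using e2
      simp only [T, Hh]
      push_cast
      rw [show (-((n:ℚ)+1)) = -((n:ℚ)+1) by ring] at *
      have e1' : poch (-((n:ℚ)+1)) (j+1) = (-((n:ℚ)+1)) * poch (-(n:ℚ)) j := e1
      rw [show ((n:ℚ) + 1 - 1) = (n:ℚ) by ring]
      rw [e1', e3, e4, e5, e6, e7, e8, e9]
      have e2' : poch ((n:ℚ)) (j + 1)
          = poch ((n:ℚ) - 1) j * ((n:ℚ) - 1 + j) * ((n:ℚ) + j) / ((n:ℚ) - 1) := by
        field_simp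
        linarith [e2]
      rw [e2']
      push_cast
      field_simp
      ring

theorem stmt0 (n : ℕ) (hn : 2 ≤ n) :
    ∑ k ∈ Finset.range (n + 1),
      poch (-(n : ℚ)) k * poch ((n : ℚ) - 1) k / (poch 1 k * poch (1/2) k)
    = (-1) ^ (n - 1) / (2 * (n : ℚ) - 1) := by
  induction n, hn using Nat.le_induction with
  | base =>
      simp [Finset.sum_range_succ, poch]
      norm_num
  | succ n hn ih =>
      have h2n : 2 * (n : ℚ) - 1 ≠ 0 := by
        have : (2:ℚ) ≤ (n:ℚ) := by exact_mod_cast hn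
        intro h; nlinarith
      have h2n1 : 2 * (n : ℚ) + 1 ≠ 0 := by positivity
      have tel : ∑ k ∈ Finset.range (n + 2),
          (-(2 * (n : ℚ) + 1) / (2 * (n : ℚ) - 1) * T (n + 1) k - T n k)
          = Hh n (n + 2) - Hh n 0 := by
        have := Finset.sum_range_sub (fun k => Hh n k) (n + 2)
        rw [← this]
        exact Finset.sum_congr rfl fun k _ => key n hn k
      have hHtop : Hh n (n + 2) = 0 := by
        show Hh n ((n + 1) + 1) = 0
        simp [Hh, poch_neg_top n]
      have hH0 : Hh n 0 = 0 := rfl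
      rw [hHtop, hH0, sub_zero, Finset.sum_sub_distrib, ← Finset.mul_sum] at tel
      have hTtop : T n (n + 1) = 0 := by
        simp [T, poch_neg_top n]
      have hsn : ∑ k ∈ Finset.range (n + 2), T n k = (-1) ^ (n - 1) / (2 * (n : ℚ) - 1) := by
        rw [Finset.sum_range_succ, hTtop, add_zero]
        exact ih
      rw [hsn] at tel
      have goal_eq : ∑ k ∈ Finset.range (n + 1 + 1),
          poch (-((n+1 : ℕ) : ℚ)) k * poch (((n+1 : ℕ) : ℚ) - 1) k / (poch 1 k * poch (1/2) k)
          = ∑ k ∈ Finset.range (n + 2), T (n + 1) k := rfl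
      rw [goal_eq]
      have hc' : (2 * (n:ℚ) + 1) / (2 * (n:ℚ) - 1) ≠ 0 := div_ne_zero h2n1 h2n
      have hS : ∑ k ∈ Finset.range (n + 2), T (n + 1) k
          = (-((-1:ℚ)) ^ (n - 1) / (2 * (n:ℚ) - 1)) / ((2 * (n:ℚ) + 1) / (2 * (n:ℚ) - 1)) := by
        rw [eq_div_iff hc']
        linear_combination (-1 : ℚ) * tel
      rw [hS]
      have hpow : ((-1 : ℚ)) ^ ((n + 1) - 1) = (-1) ^ (n - 1) * (-1) := by
        rw [Nat.add_sub_cancel]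
        conv_lhs => rw [show n = (n - 1) + 1 from (Nat.succ_pred_eq_of_pos (by omega)).symm]
        rw [pow_succ]
      have hW : 2 * (((n:ℕ)+1 : ℕ) : ℚ) - 1 ≠ 0 := by
        push_cast
        intro h; apply h2n1; linarith
      rw [div_eq_div_iff hc' hW, hpow]
      push_cast
      field_simp
      ring
end

section
/- For any integer n ≥ 2, the sum over k from 0 to n of ((-n)_k (n-1)_k (-1/2)_k) / ((1)_k^2 (1/2)_k) equals 4n(n-1)/(2n-1). -/
open Finset

lemma poch_succ_left (a : ℚ) (k : ℕ) : poch a (k + 1) = a * poch (a + 1) k := by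
  induction k with
  | zero => simp [poch]
  | succ k ih => rw [poch_succ, ih, poch_succ]; push_cast; ring

lemma poch_neg_nat (n j : ℕ) : poch (-(n : ℚ)) (n + 1 + j) = 0 := by
  induction j with
  | zero => rw [poch_succ]; simp
  | succ j ih => rw [show n + 1 + (j + 1) = (n + 1 + j) + 1 from rfl, poch_succ, ih, zero_mul]

/-- The summand. -/
def t (n k : ℕ) : ℚ :=
  poch (-(n : ℚ)) k * poch ((n : ℚ) - 1) k * poch (-(1/2)) k /
    (poch 1 k ^ 2 * poch (1/2) k)

lemma t_eq_zero (n k : ℕ) (h : n < k) : t n k = 0 := by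
  obtain ⟨j, rfl⟩ : ∃ j, k = n + 1 + j := ⟨k - (n + 1), by omega⟩
  unfold t
  rw [poch_neg_nat]
  simp

/-- The partial-sum function. -/
def S (n : ℕ) : ℚ := ∑ k ∈ Finset.range (n + 1), t n k

/-- The Zeilberger certificate polynomial factor. -/
def xc (n k : ℕ) : ℚ :=
  -(2 * (k : ℚ) ^ 2 - 2 * ((n : ℚ) ^ 2 + 2) * k + (n : ℚ) ^ 4 + (n : ℚ) ^ 2 + 2) /
    ((n : ℚ) ^ 2 * ((n : ℚ) - 1) ^ 2 * ((n : ℚ) + 1) ^ 2)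

def f (n k : ℕ) : ℚ :=
  ((n : ℚ) - 1) * (2 * n + 1) * t (n + 1) k - ((n : ℚ) + 1) * (2 * n - 1) * t n k

def G (n k : ℕ) : ℚ := (k : ℚ) ^ 2 * xc n k * f n k

lemma step (n k : ℕ) (hn : 2 ≤ n) (hk : k ≤ n) : G n (k + 1) = G n k + f n k := by
  have hN : (2 : ℚ) ≤ (n : ℚ) := by exact_mod_cast hn
  have hK : (k : ℚ) ≤ (n : ℚ) := by exact_mod_cast hk
  have hK0 : (0 : ℚ) ≤ (k : ℚ) := by positivity
  have hd1 : poch 1 k ≠ 0 := ne_of_gt (poch_pos one_pos k)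
  have hd2 : poch (1/2) k ≠ 0 := ne_of_gt (poch_pos (by norm_num) k)
  have hk1 : ((k : ℚ) + 1) ≠ 0 := by positivity
  have hk2 : ((1:ℚ)/2 + k) ≠ 0 := by positivity
  have hn0 : (n : ℚ) ≠ 0 := by intro h; rw [h] at hN; norm_num at hN
  have hn1 : (n : ℚ) - 1 ≠ 0 := by intro h; nlinarith
  have hn1' : (n : ℚ) + 1 ≠ 0 := by positivity
  have hnk1 : (n : ℚ) + 1 - k ≠ 0 := by intro h; nlinarith
  have hnk2 : (n : ℚ) - 1 + k ≠ 0 := by intro h; nlinarith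
  -- relations between pochhammer values
  have hp : poch (-((n : ℚ) + 1)) k = ((n : ℚ) + 1) * poch (-(n : ℚ)) k / ((n : ℚ) + 1 - k) := by
    have h1 := poch_succ_left (-((n : ℚ) + 1)) k
    rw [show (-((n : ℚ) + 1) + 1) = -(n : ℚ) from by ring] at h1
    rw [poch_succ] at h1
    rw [eq_div_iff hnk1]
    linear_combination -h1
  have hq : poch ((n : ℚ) - 1) k = ((n : ℚ) - 1) * poch (n : ℚ) k / ((n : ℚ) - 1 + k) := by
    have h1 := poch_succ_left ((n : ℚ) - 1) k
    rw [show ((n : ℚ) - 1 + 1) = (n : ℚ) from by ring] at h1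
    rw [poch_succ] at h1
    rw [eq_div_iff hnk2]
    linear_combination h1
  unfold G f t xc
  push_cast
  rw [show ((n : ℚ) + 1 - 1) = (n : ℚ) from by ring]
  simp only [poch_succ]
  rw [hp, hq]
  field_simp
  ring

lemma sum_f (n : ℕ) (hn : 2 ≤ n) : ∑ k ∈ Finset.range (n + 2), f n k = 0 := by
  have key : ∀ m, m ≤ n + 1 → ∑ k ∈ Finset.range m, f n k = G n m := by
    intro m
    induction m with
    | zero => intro _; simp [G]
    | succ m ih =>
        intro h
        rw [Finset.sum_range_succ, ih (by omega), step n m hn (by omega)]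
  rw [show n + 2 = (n + 1) + 1 from rfl, Finset.sum_range_succ, key (n + 1) le_rfl]
  have hN : (2 : ℚ) ≤ (n : ℚ) := by exact_mod_cast hn
  have hn0 : (n : ℚ) ≠ 0 := by intro h; rw [h] at hN; norm_num at hN
  have hn1 : (n : ℚ) - 1 ≠ 0 := by intro h; nlinarith
  have hn1' : (n : ℚ) + 1 ≠ 0 := by positivity
  have hx : ((n : ℚ) + 1) ^ 2 * xc n (n + 1) = -1 := by
    unfold xc
    push_cast
    field_simp
    ring
  show ((n + 1 : ℕ) : ℚ) ^ 2 * xc n (n + 1) * f n (n + 1) + f n (n + 1) = 0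
  push_cast
  rw [hx]
  ring

lemma S_rec (n : ℕ) (hn : 2 ≤ n) :
    ((n : ℚ) - 1) * (2 * n + 1) * S (n + 1) = ((n : ℚ) + 1) * (2 * n - 1) * S n := by
  have h1 : ∑ k ∈ Finset.range (n + 2), t n k = S n := by
    rw [show n + 2 = (n + 1) + 1 from rfl, Finset.sum_range_succ,
      t_eq_zero n (n + 1) (by omega), add_zero]
    rfl
  have h2 : ∑ k ∈ Finset.range (n + 2), t (n + 1) k = S (n + 1) := rfl
  have h3 := sum_f n hn
  unfold f at h3
  rw [Finset.sum_sub_distrib, ← Finset.mul_sum, ← Finset.mul_sum, h1, h2] at h3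
  linarith

lemma S_eq (n : ℕ) (hn : 2 ≤ n) :
    S n = 4 * (n : ℚ) * ((n : ℚ) - 1) / (2 * (n : ℚ) - 1) := by
  induction n, hn using Nat.le_induction with
  | base =>
      have p1 : ∀ a : ℚ, poch a 1 = a := by
        intro a; rw [show (1:ℕ) = 0 + 1 from rfl, poch_succ]; simp [poch]
      have p2 : ∀ a : ℚ, poch a 2 = a * (a + 1) := by
        intro a; rw [show (2:ℕ) = 1 + 1 from rfl, poch_succ, p1]; push_cast; ring
      unfold S t
      rw [Finset.sum_range_succ, Finset.sum_range_succ, Finset.sum_range_one]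
      norm_num [poch, p1, p2]
  | succ n hn ih =>
      have h := S_rec n hn
      rw [ih] at h
      have hN : (2 : ℚ) ≤ (n : ℚ) := by exact_mod_cast hn
      have hn1 : (n : ℚ) - 1 ≠ 0 := by intro h; nlinarith
      have h2 : 2 * (n : ℚ) + 1 ≠ 0 := by intro h; nlinarith
      have h3 : 2 * (n : ℚ) - 1 ≠ 0 := by intro h; nlinarith
      have hA : ((n : ℚ) - 1) * (2 * n + 1) ≠ 0 := mul_ne_zero hn1 h2
      have hS : S (n + 1)
          = ((n : ℚ) + 1) * (2 * n - 1) * (4 * n * (n - 1) / (2 * n - 1)) /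
            (((n : ℚ) - 1) * (2 * n + 1)) := by
        rw [eq_div_iff hA]
        linear_combination h
      rw [hS]
      push_cast
      rw [show (2 * ((n : ℚ) + 1) - 1) = 2 * (n : ℚ) + 1 from by ring]
      have h3' : (n : ℚ) * 2 - 1 ≠ 0 := by intro h; nlinarith
      field_simp
      ring

theorem stmt1 (n : ℕ) (hn : 2 ≤ n) :
    ∑ k ∈ Finset.range (n + 1),
      poch (-(n : ℚ)) k * poch ((n : ℚ) - 1) k * poch (-(1/2)) k /
        (poch 1 k ^ 2 * poch (1/2) k)
    = 4 * (n : ℚ) * ((n : ℚ) - 1) / (2 * (n : ℚ) - 1) := by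
  exact S_eq n hn
end

section
/- For any odd prime p and any integer k with 0 ≤ k ≤ (p-1)/2, the product ((1+p)/2)_k · ((1-p)/2)_k is congruent to ((1/2)_k)^2 · (1 - p^2 · sum over j from 1 to k of 1/(2j-1)^2) modulo p^4. -/
open Finset

lemma norm_two (p : ℕ) (hp : p.Prime) (hodd : Odd p) : padicNorm p (2 : ℚ) = 1 := by
  haveI : Fact p.Prime := ⟨hp⟩
  have hp2 : p ≠ 2 := by rintro rfl; simp [Nat.odd_iff] at hodd
  have : ¬ p ∣ 2 := fun h => hp2 ((Nat.prime_dvd_prime_iff_eq hp Nat.prime_two).mp h)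
  simpa using (padicNorm.nat_eq_one_iff (p := p) 2).mpr this

lemma norm_half_add (p : ℕ) (hp : p.Prime) (hodd : Odd p) (j : ℕ) (hj : 2 * j + 1 < p) :
    padicNorm p ((1 : ℚ)/2 + j) = 1 := by
  haveI : Fact p.Prime := ⟨hp⟩
  have h1 : ((1 : ℚ)/2 + j) = ((2 * j + 1 : ℕ) : ℚ) / 2 := by push_cast; ring
  have h2 : ¬ p ∣ (2 * j + 1) := Nat.not_dvd_of_pos_of_lt (Nat.succ_pos _) hj
  rw [h1, padicNorm.div, (padicNorm.nat_eq_one_iff (p := p) _).mpr h2,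
    norm_two p hp hodd]
  norm_num

lemma norm_poch_half (p : ℕ) (hp : p.Prime) (hodd : Odd p) (k : ℕ) (hk : 2 * k < p) :
    padicNorm p (poch (1/2) k) ≤ 1 := by
  haveI : Fact p.Prime := ⟨hp⟩
  induction k with
  | zero => simp [poch]
  | succ n ih =>
    have hn : 2 * n < p := by omega
    rw [show poch (1/2) (n+1) = poch (1/2) n * (1/2 + n) from rfl, padicNorm.mul,
      norm_half_add p hp hodd n (by omega)]
    simpa using ih hn

lemma norm_p_sq (p : ℕ) (hp : p.Prime) (hodd : Odd p) :
    padicNorm p ((p : ℚ)^2 / 4) = ((p : ℚ))⁻¹ ^ 2 := by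
  haveI : Fact p.Prime := ⟨hp⟩
  have h4 : padicNorm p (4 : ℚ) = 1 := by
    have : (4 : ℚ) = (2 : ℚ) * 2 := by norm_num
    rw [this, padicNorm.mul, norm_two p hp hodd]; norm_num
  rw [padicNorm.div, h4, sq, padicNorm.mul, padicNorm.padicNorm_p hp.one_lt]
  ring

lemma aux (p : ℕ) (hp : p.Prime) (hodd : Odd p) (k : ℕ) (hk : 2 * k < p) :
    ∃ E : ℚ, padicNorm p E ≤ 1 ∧
      poch ((1 + (p : ℚ)) / 2) k * poch ((1 - (p : ℚ)) / 2) k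
        = poch (1/2) k ^ 2 * (1 - ((p : ℚ)^2/4) * ∑ j ∈ range k, (((1:ℚ)/2 + j)^2)⁻¹)
          + ((p : ℚ)^2/4)^2 * E := by
  haveI : Fact p.Prime := ⟨hp⟩
  induction k with
  | zero => exact ⟨0, by simp [poch]⟩
  | succ n ih =>
    obtain ⟨E, hE, heq⟩ := ih (by omega)
    have hqn : padicNorm p ((p : ℚ)^2 / 4) ≤ 1 := by
      rw [norm_p_sq p hp hodd]
      have h1 : (1:ℚ) ≤ (p:ℚ) := by exact_mod_cast hp.one_lt.le
      have : (p:ℚ)⁻¹ ≤ 1 := by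
        rw [inv_le_one_iff₀]; right; exact h1
      calc (p:ℚ)⁻¹ ^ 2 ≤ 1 ^ 2 := by
            apply pow_le_pow_left₀ (by positivity) this
        _ = 1 := one_pow 2
    have hsumnorm : padicNorm p (∑ j ∈ range n, (((1:ℚ)/2 + j)^2)⁻¹) ≤ 1 := by
      apply padicNorm.sum_le' _ zero_le_one
      intro i hi
      have hi' : 2 * i + 1 < p := by
        have := Finset.mem_range.mp hi; omega
      have h := norm_half_add p hp hodd i hi'
      rw [inv_eq_one_div, padicNorm.div, sq, padicNorm.mul, h]
      norm_num
    have hck : padicNorm p (((1:ℚ)/2 + n)^2 - (p : ℚ)^2/4) ≤ 1 := by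
      apply le_trans padicNorm.sub
      apply max_le _ hqn
      rw [sq, padicNorm.mul, norm_half_add p hp hodd n (by omega)]
      norm_num
    refine ⟨poch (1/2) n ^ 2 * (∑ j ∈ range n, (((1:ℚ)/2 + j)^2)⁻¹)
      + E * (((1:ℚ)/2 + n)^2 - (p : ℚ)^2/4), ?_, ?_⟩
    · apply le_trans padicNorm.nonarchimedean
      apply max_le
      · rw [padicNorm.mul, sq, padicNorm.mul]
        have h1 := norm_poch_half p hp hodd n (by omega)
        have h0 := padicNorm.nonneg (p := p) (poch (1/2) n)
        have h2 := padicNorm.nonneg (p := p) (∑ j ∈ range n, (((1:ℚ)/2 + j)^2)⁻¹)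
        nlinarith
      · rw [padicNorm.mul]
        have h0 := padicNorm.nonneg (p := p) E
        have h1 := padicNorm.nonneg (p := p) (((1:ℚ)/2 + n)^2 - (p : ℚ)^2/4)
        nlinarith
    · have key : ((((1:ℚ)/2 + n))^2)⁻¹ * (((1:ℚ)/2 + n))^2 = 1 :=
        inv_mul_cancel₀ (by positivity)
      rw [show poch ((1 + (p : ℚ)) / 2) (n+1)
            = poch ((1 + (p : ℚ)) / 2) n * ((1 + (p : ℚ)) / 2 + n) from rfl,
          show poch ((1 - (p : ℚ)) / 2) (n+1)
            = poch ((1 - (p : ℚ)) / 2) n * ((1 - (p : ℚ)) / 2 + n) from rfl,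
          show poch (1/2 : ℚ) (n+1) = poch (1/2) n * (1/2 + n) from rfl,
          Finset.sum_range_succ]
      linear_combination ((((1:ℚ)/2 + n))^2 - (p : ℚ)^2/4) * heq
        + ((p : ℚ)^2/4) * poch (1/2) n ^ 2 * key

theorem stmt10 (p : ℕ) (hp : p.Prime) (hodd : Odd p) (k : ℕ) (hk : k ≤ (p - 1) / 2) :
    padicNorm p
      (poch ((1 + (p : ℚ)) / 2) k * poch ((1 - (p : ℚ)) / 2) k
        - poch (1/2) k ^ 2 *
            (1 - (p : ℚ) ^ 2 * ∑ j ∈ Finset.Icc 1 k, (1 : ℚ) / (2 * (j : ℚ) - 1) ^ 2))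
      ≤ (p : ℚ) ^ (-4 : ℤ) := by
  haveI : Fact p.Prime := ⟨hp⟩
  have hp3 : 3 ≤ p := by
    have h2 := hp.two_le
    have hne : p ≠ 2 := by rintro rfl; simp [Nat.odd_iff] at hodd
    omega
  have h2k : 2 * k < p := by
    have h1 : 2 * ((p - 1) / 2) ≤ p - 1 := by
      rw [mul_comm]; exact Nat.div_mul_le_self _ 2
    omega
  obtain ⟨E, hE, heq⟩ := aux p hp hodd k h2k
  have hsum : (p:ℚ)^2 * ∑ j ∈ Finset.Icc 1 k, (1 : ℚ) / (2 * (j : ℚ) - 1) ^ 2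
      = ((p : ℚ)^2/4) * ∑ j ∈ range k, (((1:ℚ)/2 + j)^2)⁻¹ := by
    rw [← Finset.Ico_add_one_right_eq_Icc, Finset.sum_Ico_eq_sum_range]
    rw [Finset.mul_sum, Finset.mul_sum]
    refine Finset.sum_congr rfl fun i _ => ?_
    have hnn : (0:ℚ) ≤ (i:ℚ) := Nat.cast_nonneg i
    have h1 : (2 * ((1:ℚ) + i) - 1) ≠ 0 := by intro h; linarith
    have h2 : ((1:ℚ)/2 + i) ≠ 0 := by positivity
    push_cast
    field_simp
    ring
  have hdiff : poch ((1 + (p : ℚ)) / 2) k * poch ((1 - (p : ℚ)) / 2) k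
        - poch (1/2) k ^ 2 *
            (1 - (p : ℚ) ^ 2 * ∑ j ∈ Finset.Icc 1 k, (1 : ℚ) / (2 * (j : ℚ) - 1) ^ 2)
      = ((p : ℚ)^2/4)^2 * E := by
    linear_combination heq + poch (1/2) k ^ 2 * hsum
  rw [hdiff, padicNorm.mul, sq, padicNorm.mul, norm_p_sq p hp hodd]
  have hppos : (0:ℚ) < (p:ℚ) := by exact_mod_cast hp.pos
  have hkey : (p:ℚ)⁻¹ ^ 2 * (p:ℚ)⁻¹ ^ 2 = (p : ℚ) ^ (-4 : ℤ) := by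
    rw [← pow_add]
    rw [← zpow_natCast ((p:ℚ)⁻¹), zpow_neg, inv_zpow]
    norm_num
  rw [← hkey]
  have hpos : (0:ℚ) < (p:ℚ)⁻¹ ^ 2 * (p:ℚ)⁻¹ ^ 2 := by positivity
  nlinarith [padicNorm.nonneg (p := p) E]
end

section
/- For any prime p and any integer k with 0 ≤ k ≤ p-1, the binomial coefficient binomial(p-1, k) is congruent to (-1)^k (1 - p H_k + (p^2/2)(H_k^2 - H_k^(2))) modulo p^3, where H_k = sum over j from 1 to k of 1/j and H_k^(2) = sum over j from 1 to k of 1/j^2. -/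
open Finset

section aux
variable {p : ℕ} [hp : Fact p.Prime]

lemma norm_nat_one {m : ℕ} (h0 : 0 < m) (h1 : m < p) : padicNorm p (m : ℚ) = 1 :=
  (padicNorm.nat_eq_one_iff m).2 (fun hd => absurd (Nat.le_of_dvd h0 hd) (not_le.2 h1))

lemma normH_le {k : ℕ} (hk : k < p) :
    padicNorm p (∑ j ∈ Finset.Icc 1 k, (1 : ℚ) / j) ≤ 1 := by
  refine padicNorm.sum_le' (fun j hj => ?_) zero_le_one
  obtain ⟨hj1, hj2⟩ := Finset.mem_Icc.1 hj
  rw [padicNorm.div, norm_nat_one hj1 (lt_of_le_of_lt hj2 hk)]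
  simp

lemma normH2_le {k : ℕ} (hk : k < p) :
    padicNorm p (∑ j ∈ Finset.Icc 1 k, (1 : ℚ) / (j : ℚ) ^ 2) ≤ 1 := by
  refine padicNorm.sum_le' (fun j hj => ?_) zero_le_one
  obtain ⟨hj1, hj2⟩ := Finset.mem_Icc.1 hj
  have : padicNorm p ((j : ℚ) ^ 2) = 1 := by
    rw [sq, padicNorm.mul, norm_nat_one hj1 (lt_of_le_of_lt hj2 hk)]; ring
  rw [padicNorm.div, this]
  simp

end aux

theorem stmt11 (p : ℕ) (hp : p.Prime) (k : ℕ) (hk : k ≤ p - 1) :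
    padicNorm p
      ((Nat.choose (p - 1) k : ℚ)
        - (-1) ^ k *
            (1 - (p : ℚ) * (∑ j ∈ Finset.Icc 1 k, (1 : ℚ) / j)
              + (p : ℚ) ^ 2 / 2 *
                  ((∑ j ∈ Finset.Icc 1 k, (1 : ℚ) / j) ^ 2
                    - ∑ j ∈ Finset.Icc 1 k, (1 : ℚ) / (j : ℚ) ^ 2)))
      ≤ (p : ℚ) ^ (-3 : ℤ) := by
  haveI : Fact p.Prime := ⟨hp⟩
  have hppos : (0:ℚ) < p := by exact_mod_cast hp.pos
  have hpow_nonneg : (0:ℚ) ≤ (p : ℚ) ^ (-3 : ℤ) := zpow_nonneg hppos.le _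
  rcases eq_or_ne p 2 with rfl | hodd
  · -- p = 2 : k = 0 or 1, difference is 0
    interval_cases k
    · norm_num
    · norm_num [Finset.Icc_self]
  · -- p odd
    have hp2 : ¬ (p ∣ 2) := fun h => hodd ((Nat.prime_dvd_prime_iff_eq hp Nat.prime_two).1 h)
    induction k with
    | zero => simp
    | succ k ih =>
      have hk' : k ≤ p - 1 := Nat.le_of_succ_le hk
      have IH := ih hk'
      set H := ∑ j ∈ Finset.Icc 1 k, (1 : ℚ) / j with hH
      set H2 := ∑ j ∈ Finset.Icc 1 k, (1 : ℚ) / (j : ℚ) ^ 2 with hH2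
      set C := (Nat.choose (p - 1) k : ℚ) with hC
      set D := C - (-1) ^ k * (1 - (p : ℚ) * H + (p : ℚ) ^ 2 / 2 * (H ^ 2 - H2)) with hD
      have hkp : k + 1 < p := lt_of_le_of_lt hk (Nat.sub_lt hp.pos one_pos)
      have hm0 : ((k:ℚ) + 1) ≠ 0 := by positivity
      -- sums over Icc 1 (k+1)
      have e1 : ∑ j ∈ Finset.Icc 1 (k+1), (1 : ℚ) / j = H + 1 / ((k:ℚ)+1) := by
        rw [Finset.sum_Icc_succ_top (Nat.one_le_iff_ne_zero.2 (Nat.succ_ne_zero k))]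
        push_cast; rfl
      have e2 : ∑ j ∈ Finset.Icc 1 (k+1), (1 : ℚ) / (j : ℚ)^2 = H2 + 1 / ((k:ℚ)+1)^2 := by
        rw [Finset.sum_Icc_succ_top (Nat.one_le_iff_ne_zero.2 (Nat.succ_ne_zero k))]
        push_cast; rfl
      -- choose recursion
      have hcast : ((p - 1 - k : ℕ) : ℚ) = (p:ℚ) - 1 - k := by
        have h1 : k ≤ p - 1 := hk'
        have h2 : 1 ≤ p := hp.one_le
        push_cast [Nat.cast_sub h1, Nat.cast_sub h2]
        ring
      have e3 : (Nat.choose (p - 1) (k+1) : ℚ) = C * ((p:ℚ) - 1 - k) / ((k:ℚ)+1) := by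
        have := Nat.choose_succ_right_eq (p-1) k
        have hq : ((Nat.choose (p-1) (k+1) : ℕ) : ℚ) * ((k:ℚ)+1)
            = C * ((p:ℚ) - 1 - k) := by
          rw [← hcast, hC]
          exact_mod_cast congrArg (fun n : ℕ => (n : ℚ)) this
        field_simp
        linarith [hq]
      have key :
          (Nat.choose (p - 1) (k+1) : ℚ)
            - (-1) ^ (k+1) *
              (1 - (p : ℚ) * (∑ j ∈ Finset.Icc 1 (k+1), (1 : ℚ) / j)
                + (p : ℚ) ^ 2 / 2 *
                    ((∑ j ∈ Finset.Icc 1 (k+1), (1 : ℚ) / j) ^ 2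
                      - ∑ j ∈ Finset.Icc 1 (k+1), (1 : ℚ) / (j : ℚ) ^ 2))
          = D * (((p:ℚ) - 1 - k) / ((k:ℚ)+1))
            + (-1) ^ k * ((p:ℚ)^3 / (2 * ((k:ℚ)+1))) * (H^2 - H2) := by
        rw [e1, e2, e3, hD, pow_succ]
        field_simp
        ring
      rw [key]
      refine le_trans padicNorm.nonarchimedean (max_le ?_ ?_)
      · -- first term
        rw [padicNorm.mul, padicNorm.div]
        have hnum : padicNorm p ((p:ℚ) - 1 - k) ≤ 1 := by
          have : ((p:ℚ) - 1 - k) = (((p:ℤ) - 1 - k : ℤ) : ℚ) := by push_cast; ring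
          rw [this]; exact padicNorm.of_int _
        have hden : padicNorm p ((k:ℚ)+1) = 1 := by
          have : ((k:ℚ)+1) = ((k+1 : ℕ) : ℚ) := by push_cast; ring
          rw [this]; exact norm_nat_one (Nat.succ_pos k) hkp
        rw [hden, div_one]
        calc padicNorm p D * padicNorm p ((p:ℚ) - 1 - k)
            ≤ (p:ℚ) ^ (-3:ℤ) * 1 :=
              mul_le_mul IH hnum (padicNorm.nonneg _) hpow_nonneg
          _ = (p:ℚ) ^ (-3:ℤ) := mul_one _
      · -- second term
        rw [padicNorm.mul, padicNorm.mul, padicNorm.div]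
        have h1 : padicNorm p ((-1:ℚ)^k) = 1 := by
          rcases neg_one_pow_eq_or ℚ k with h | h <;> simp [h]
        have h2 : padicNorm p ((p:ℚ)^3) = (p:ℚ) ^ (-3:ℤ) := by
          have hpp := padicNorm.padicNorm_p (p := p) hp.one_lt
          rw [show ((p:ℚ)^3) = (p:ℚ)*((p:ℚ)*(p:ℚ)) by ring, padicNorm.mul, padicNorm.mul, hpp,
            zpow_neg, show ((3:ℤ)) = ((3:ℕ):ℤ) by norm_num, zpow_natCast,
            show ((p:ℚ)^(3:ℕ)) = (p:ℚ)*((p:ℚ)*(p:ℚ)) by ring, mul_inv, mul_inv]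
        have h3 : padicNorm p (2 * ((k:ℚ)+1)) = 1 := by
          have : (2 * ((k:ℚ)+1)) = ((2*(k+1) : ℕ) : ℚ) := by push_cast; ring
          rw [this]
          refine (padicNorm.nat_eq_one_iff _).2 ?_
          intro hdvd
          rcases (Nat.Prime.dvd_mul hp).1 hdvd with h | h
          · exact hp2 h
          · exact absurd (Nat.le_of_dvd (Nat.succ_pos k) h) (not_le.2 hkp)
        have h4 : padicNorm p (H^2 - H2) ≤ 1 := by
          refine le_trans padicNorm.sub (max_le ?_ (normH2_le (lt_trans (Nat.lt_succ_self k) hkp)))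
          rw [sq, padicNorm.mul]
          have := normH_le (p := p) (lt_trans (Nat.lt_succ_self k) hkp)
          calc padicNorm p H * padicNorm p H ≤ 1 * 1 :=
                mul_le_mul this this (padicNorm.nonneg _) zero_le_one
            _ = 1 := one_mul 1
        rw [h1, h2, h3, one_mul, div_one]
        calc (p:ℚ) ^ (-3:ℤ) * padicNorm p (H^2 - H2) ≤ (p:ℚ) ^ (-3:ℤ) * 1 :=
              mul_le_mul_of_nonneg_left h4 hpow_nonneg
          _ = (p:ℚ) ^ (-3:ℤ) := mul_one _
end

section
/- For any prime p ≥ 5, the harmonic number H_((p-1)/2) = sum over j from 1 to (p-1)/2 of 1/j is congruent to -2 q_p(2) + p q_p(2)^2 modulo p^2, where q_p(2) = (2^(p-1)-1)/p. -/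
open Finset

section helpers

@[to_additive sum_range_two_mul]
lemma prod_range_two_mul {M : Type*} [CommMonoid M] (m : ℕ) (f : ℕ → M) :
    ∏ j ∈ range (2*m), f j = (∏ i ∈ range m, f (2*i)) * ∏ i ∈ range m, f (2*i+1) := by
  induction m with
  | zero => simp
  | succ m ih =>
    have h : 2*(m+1) = (2*m + 1) + 1 := by ring
    rw [h, prod_range_succ, prod_range_succ, ih, prod_range_succ, prod_range_succ]
    rw [mul_mul_mul_comm, mul_assoc]

lemma sum_range_two_mul_reflect {M : Type*} [AddCommMonoid M] (m : ℕ) (f : ℕ → M) :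
    ∑ j ∈ range (2*m), f j = ∑ i ∈ range m, (f i + f (2*m-1-i)) := by
  rw [two_mul, Finset.sum_range_add, ← Finset.sum_range_reflect (fun j => f (m + j)) m,
    ← Finset.sum_add_distrib]
  refine Finset.sum_congr rfl fun i hi => ?_
  have hi' : i < m := mem_range.mp hi
  congr 2
  omega

lemma sum_Icc_one (m : ℕ) {M : Type*} [AddCommMonoid M] (f : ℕ → M) :
    ∑ j ∈ Icc 1 m, f j = ∑ i ∈ range m, f (i+1) := by
  induction m with
  | zero => simp
  | succ m ih => rw [Finset.sum_Icc_succ_top (by omega), ih, sum_range_succ]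

lemma nat_prod_identity (m : ℕ) :
    ∏ i ∈ range m, ((2*m+1) + (2*i+1)) = 2^(2*m) * ∏ i ∈ range m, (2*i+1) := by
  have key : ∏ i ∈ range m, (m+1+i) = 2^m * ∏ i ∈ range m, (2*i+1) := by
    have A : (2*m).factorial = m.factorial * ∏ i ∈ range m, (m+1+i) := by
      calc (2*m).factorial = ∏ x ∈ range (m+m), (x+1) := by
            rw [Finset.prod_range_add_one_eq_factorial, two_mul]
        _ = (∏ x ∈ range m, (x+1)) * ∏ x ∈ range m, (m + x + 1) := Finset.prod_range_add _ m m
        _ = m.factorial * ∏ i ∈ range m, (m+1+i) := by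
            rw [Finset.prod_range_add_one_eq_factorial]
            exact congrArg _ (Finset.prod_congr rfl fun i _ => by omega)
    have C : (2*m).factorial = (∏ i ∈ range m, (2*i+1)) * (2^m * m.factorial) := by
      calc (2*m).factorial = ∏ x ∈ range (2*m), (x+1) := by
            rw [Finset.prod_range_add_one_eq_factorial]
        _ = (∏ i ∈ range m, (2*i+1)) * ∏ i ∈ range m, (2*i+1+1) := prod_range_two_mul m _
        _ = (∏ i ∈ range m, (2*i+1)) * (2^m * m.factorial) := by
            congr 1
            calc ∏ i ∈ range m, (2*i+1+1) = ∏ i ∈ range m, (2 * (i+1)) :=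
                  Finset.prod_congr rfl fun i _ => by omega
              _ = 2^m * m.factorial := by
                  rw [Finset.prod_mul_distrib, Finset.prod_const, card_range,
                    Finset.prod_range_add_one_eq_factorial]
    have hm : 0 < m.factorial := m.factorial_pos
    apply Nat.eq_of_mul_eq_mul_left hm
    rw [← A, C]; ring
  calc ∏ i ∈ range m, ((2*m+1) + (2*i+1)) = ∏ i ∈ range m, (2 * (m+1+i)) :=
        Finset.prod_congr rfl fun i _ => by omega
    _ = 2^m * ∏ i ∈ range m, (m+1+i) := by
        rw [Finset.prod_mul_distrib, Finset.prod_const, card_range]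
    _ = 2^(2*m) * ∏ i ∈ range m, (2*i+1) := by rw [key, two_mul, pow_add]; ring

end helpers

section padic
variable {p : ℕ} [hp : Fact p.Prime]

lemma my_norm_sum_le {ι : Type*} {s : Finset ι} {f : ι → ℚ_[p]} {C : ℝ} (hC : 0 ≤ C)
    (h : ∀ i ∈ s, ‖f i‖ ≤ C) : ‖∑ i ∈ s, f i‖ ≤ C := by
  induction s using Finset.cons_induction with
  | empty => simpa
  | cons a s ha ih =>
    rw [Finset.sum_cons]
    exact le_trans (Padic.nonarchimedean _ _)
      (max_le (h a (Finset.mem_cons_self _ _)) (ih fun i hi => h i (Finset.mem_cons_of_mem hi)))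

lemma nonarch_sub (x y : ℚ_[p]) : ‖x - y‖ ≤ max ‖x‖ ‖y‖ := by
  rw [sub_eq_add_neg]
  simpa [norm_neg] using Padic.nonarchimedean x (-y)

lemma my_inv_add_inv {K : Type*} [Field K] {a b : K} (ha : a ≠ 0) (hb : b ≠ 0) :
    a⁻¹ + b⁻¹ = (a + b) * (a⁻¹ * b⁻¹) := by
  field_simp
  ring

lemma norm_int_mul_p_le {k : ℤ} : ‖((p * k : ℤ) : ℚ_[p])‖ ≤ (p:ℝ)⁻¹ := by
  push_cast
  rw [norm_mul, Padic.norm_p]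
  calc (p:ℝ)⁻¹ * ‖((k:ℤ) : ℚ_[p])‖ ≤ (p:ℝ)⁻¹ * 1 :=
        mul_le_mul_of_nonneg_left (Padic.norm_int_le_one k) (by positivity)
    _ = (p:ℝ)⁻¹ := mul_one _

lemma norm_nat_le_inv_of_dvd {n : ℕ} (h : p ∣ n) : ‖(n : ℚ_[p])‖ ≤ (p:ℝ)⁻¹ := by
  obtain ⟨k, rfl⟩ := h
  have : ((p * k : ℕ) : ℚ_[p]) = ((p * (k:ℤ) : ℤ) : ℚ_[p]) := by push_cast; ring
  rw [this]
  exact norm_int_mul_p_le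

lemma norm_nat_eq_one {n : ℕ} (h : ¬ p ∣ n) : ‖(n : ℚ_[p])‖ = 1 := by
  have h1 : ‖((n:ℤ) : ℚ_[p])‖ ≤ 1 := Padic.norm_int_le_one n
  have h2 : ¬ ‖((n:ℤ) : ℚ_[p])‖ < 1 := by
    rw [Padic.norm_intCast_lt_one_iff]
    exact_mod_cast h
  push_cast at h1 h2 ⊢
  linarith [lt_or_eq_of_le h1]

lemma nat_ne_zero_K {n : ℕ} (h : ¬ p ∣ n) : (n : ℚ_[p]) ≠ 0 := by
  intro h0
  have := norm_nat_eq_one (p := p) h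
  rw [h0] at this
  simp at this

lemma norm_nat_inv_eq_one {n : ℕ} (h : ¬ p ∣ n) : ‖(n : ℚ_[p])⁻¹‖ = 1 := by
  rw [norm_inv, norm_nat_eq_one h, inv_one]

lemma norm_fermat {n : ℕ} (h : ¬ p ∣ n) : ‖(n : ℚ_[p])^(p-1) - 1‖ ≤ (p:ℝ)⁻¹ := by
  have hne : ((n:ℕ) : ZMod p) ≠ 0 := by
    rw [Ne, ZMod.natCast_eq_zero_iff]; exact h
  have hdvd : (p:ℤ) ∣ ((n:ℤ)^(p-1) - 1) := by
    rw [← ZMod.intCast_zmod_eq_zero_iff_dvd]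
    push_cast
    rw [ZMod.pow_card_sub_one_eq_one hne]
    ring
  obtain ⟨k, hk⟩ := hdvd
  have key : (n : ℚ_[p])^(p-1) - 1 = (((p:ℤ) * k : ℤ) : ℚ_[p]) := by
    rw [show ((n : ℚ_[p])^(p-1) - 1) = (((n:ℤ)^(p-1) - 1 : ℤ) : ℚ_[p]) by push_cast; ring, hk]
  rw [key]
  exact_mod_cast norm_int_mul_p_le

lemma prod_expand (m : ℕ) (z : ℕ → ℚ_[p]) {ε : ℝ} (hε0 : 0 ≤ ε) (hε1 : ε ≤ 1)
    (hz : ∀ i, i < m → ‖z i‖ ≤ ε) :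
    ‖(∏ i ∈ range m, (1 + z i)) - (1 + (∑ i ∈ range m, z i)
      + ∑ i ∈ range m, z i * ∑ j ∈ range i, z j)‖ ≤ ε^3 := by
  induction m with
  | zero => simpa using by positivity
  | succ m ih =>
    have hzm : ∀ i, i < m → ‖z i‖ ≤ ε := fun i hi => hz i (by omega)
    have hS : ‖∑ i ∈ range m, z i‖ ≤ ε :=
      my_norm_sum_le hε0 fun i hi => hzm i (mem_range.mp hi)
    have hT : ‖∑ i ∈ range m, z i * ∑ j ∈ range i, z j‖ ≤ ε^2 := by
      refine my_norm_sum_le (by positivity) fun i hi => ?_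
      rw [norm_mul, sq]
      refine mul_le_mul (hzm i (mem_range.mp hi)) ?_ (norm_nonneg _) hε0
      exact my_norm_sum_le hε0 fun j hj =>
        hzm j (by have := mem_range.mp hj; have := mem_range.mp hi; omega)
    have hc := ih hzm
    set S := ∑ i ∈ range m, z i with hSdef
    set T := ∑ i ∈ range m, z i * ∑ j ∈ range i, z j with hTdef
    set c := (∏ i ∈ range m, (1 + z i)) - (1 + S + T) with hcdef
    have hP : ∏ i ∈ range m, (1 + z i) = 1 + S + T + c := by rw [hcdef]; ring
    rw [prod_range_succ, sum_range_succ, sum_range_succ, hP]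
    have hgoal : (1 + S + T + c) * (1 + z m) - (1 + (S + z m) + (T + z m * S))
        = c + z m * T + z m * c := by ring
    rw [hgoal]
    have hzmε : ‖z m‖ ≤ ε := hz m (by omega)
    have h1 : ‖z m * T‖ ≤ ε^3 := by
      rw [norm_mul]
      calc ‖z m‖ * ‖T‖ ≤ ε * ε^2 := mul_le_mul hzmε hT (norm_nonneg _) hε0
        _ = ε^3 := by ring
    have h2 : ‖z m * c‖ ≤ ε^3 := by
      rw [norm_mul]
      calc ‖z m‖ * ‖c‖ ≤ 1 * ε^3 :=
            mul_le_mul (le_trans hzmε hε1) hc (norm_nonneg _) zero_le_one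
        _ = ε^3 := one_mul _
    exact le_trans (Padic.nonarchimedean _ _)
      (max_le (le_trans (Padic.nonarchimedean _ _) (max_le hc h1)) h2)

lemma two_mul_pairsum {K : Type*} [CommRing K] (m : ℕ) (z : ℕ → K) :
    2 * (∑ i ∈ range m, z i * ∑ j ∈ range i, z j)
      = (∑ i ∈ range m, z i)^2 - ∑ i ∈ range m, (z i)^2 := by
  induction m with
  | zero => simp
  | succ m ih =>
    rw [sum_range_succ, sum_range_succ, sum_range_succ]
    linear_combination ih

end padic

section zmod
variable {p m : ℕ} [hp : Fact p.Prime] (hm : p = 2*m+1) (hp5 : 5 ≤ p)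
include hm hp5

lemma zmod_full_sum : ∑ j ∈ range (2*m), ((j+1 : ℕ) : ZMod p)^(p-3) = 0 := by
  have hcard : Fintype.card (ZMod p) = p := ZMod.card p
  have huniv : ∑ x : ZMod p, x^(p-3) = 0 :=
    FiniteField.sum_pow_lt_card_sub_one (ZMod p) (p-3) (by omega)
  have hbij : ∑ j ∈ range p, ((j : ℕ) : ZMod p)^(p-3) = ∑ x : ZMod p, x^(p-3) := by
    apply Finset.sum_nbij' (fun j => ((j:ℕ) : ZMod p)) (fun x => x.val)
    · intro a _; exact mem_univ _
    · intro x _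
      exact mem_range.mpr (ZMod.val_lt x)
    · intro a ha
      exact ZMod.val_cast_of_lt (mem_range.mp ha)
    · intro x _
      exact ZMod.natCast_rightInverse x
    · intro a _; rfl
  have hrange : range p = range (2*m+1) := by rw [hm]
  have hsplit : ∑ j ∈ range p, ((j : ℕ) : ZMod p)^(p-3)
      = (∑ j ∈ range (2*m), ((j+1 : ℕ) : ZMod p)^(p-3)) + ((0:ℕ) : ZMod p)^(p-3) := by
    rw [hrange, Finset.sum_range_succ']
  have hzero : ((0:ℕ) : ZMod p)^(p-3) = 0 := by
    rw [Nat.cast_zero, zero_pow (by omega)]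
  rw [hsplit, hzero, add_zero] at hbij
  rw [hbij, huniv]

lemma zmod_half_sum : ∑ i ∈ range m, ((i+1 : ℕ) : ZMod p)^(p-3) = 0 := by
  have heven : Even (p-3) := ⟨m-1, by omega⟩
  have hfull := zmod_full_sum (p := p) (m := m) hm hp5
  rw [sum_range_two_mul_reflect] at hfull
  have hterm : ∀ i ∈ range m, (((i+1:ℕ) : ZMod p)^(p-3) + ((2*m-1-i+1 : ℕ) : ZMod p)^(p-3))
      = 2 * ((i+1 : ℕ) : ZMod p)^(p-3) := by
    intro i hi
    have hi' : i < m := mem_range.mp hi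
    have h1 : (2*m-1-i+1 : ℕ) = p - (i+1) := by omega
    have h2 : ((p - (i+1) : ℕ) : ZMod p) = -((i+1:ℕ) : ZMod p) := by
      have : (i+1) ≤ p := by omega
      rw [Nat.cast_sub this, ZMod.natCast_self, zero_sub]
    rw [h1, h2, heven.neg_pow]
    ring
  rw [Finset.sum_congr rfl hterm, ← Finset.mul_sum] at hfull
  have h2ne : (2 : ZMod p) ≠ 0 := by
    have : ¬ (p ∣ 2) := by intro h; have := Nat.le_of_dvd (by norm_num) h; omega
    have := (ZMod.natCast_eq_zero_iff 2 p).not.mpr this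
    simpa using this
  exact (mul_eq_zero.mp hfull).resolve_left h2ne

lemma zmod_odd_sum : ∑ i ∈ range m, ((2*i+1 : ℕ) : ZMod p)^(p-3) = 0 := by
  have hfull := zmod_full_sum (p := p) (m := m) hm hp5
  rw [sum_range_two_mul (M := ZMod p) m (fun j => ((j+1 : ℕ) : ZMod p)^(p-3))] at hfull
  have heven : ∑ i ∈ range m, ((2*i+1+1 : ℕ) : ZMod p)^(p-3) = 0 := by
    have : ∀ i ∈ range m, ((2*i+1+1 : ℕ) : ZMod p)^(p-3)
        = (2:ZMod p)^(p-3) * ((i+1 : ℕ) : ZMod p)^(p-3) := by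
      intro i _
      rw [show (2*i+1+1 : ℕ) = 2*(i+1) by ring, Nat.cast_mul, mul_pow]
      norm_num
    rw [Finset.sum_congr rfl this, ← Finset.mul_sum, zmod_half_sum hm hp5, mul_zero]
  rw [heven, add_zero] at hfull
  exact hfull

lemma nat_dvd_half_sum : p ∣ ∑ i ∈ range m, (i+1)^(p-3) := by
  rw [← ZMod.natCast_eq_zero_iff]
  push_cast
  exact_mod_cast zmod_half_sum hm hp5

lemma nat_dvd_odd_sum : p ∣ ∑ i ∈ range m, (2*i+1)^(p-3) := by
  rw [← ZMod.natCast_eq_zero_iff]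
  push_cast
  exact_mod_cast zmod_odd_sum hm hp5

end zmod

section core
variable {p m : ℕ} [hp : Fact p.Prime]

lemma norm_inv_sq_sum_le (hp5 : 5 ≤ p) (g : ℕ → ℕ) (m : ℕ)
    (hg : ∀ i, i < m → ¬ p ∣ g i)
    (hdvd : p ∣ ∑ i ∈ range m, (g i)^(p-3)) :
    ‖∑ i ∈ range m, ((g i : ℚ_[p])⁻¹)^2‖ ≤ (p:ℝ)⁻¹ := by
  have key : ∀ i, i < m → ((g i : ℚ_[p])⁻¹)^2 - (g i : ℚ_[p])^(p-3)
      = ((g i : ℚ_[p])⁻¹)^2 * (1 - (g i : ℚ_[p])^(p-1)) := by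
    intro i him
    have ha : (g i : ℚ_[p]) ≠ 0 := nat_ne_zero_K (hg i him)
    have hpow : (g i : ℚ_[p])^(p-1) = (g i : ℚ_[p])^(p-3) * (g i : ℚ_[p])^2 := by
      rw [← pow_add]; congr 1; omega
    rw [hpow]
    field_simp
  have hsplit : ∑ i ∈ range m, ((g i : ℚ_[p])⁻¹)^2
      = (∑ i ∈ range m, (g i : ℚ_[p])^(p-3))
        + ∑ i ∈ range m, (((g i : ℚ_[p])⁻¹)^2 - (g i : ℚ_[p])^(p-3)) := by
    rw [← Finset.sum_add_distrib]
    exact Finset.sum_congr rfl fun i _ => by ring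
  rw [hsplit]
  refine le_trans (Padic.nonarchimedean _ _) (max_le ?_ ?_)
  · have hcast : ∑ i ∈ range m, (g i : ℚ_[p])^(p-3)
        = ((∑ i ∈ range m, (g i)^(p-3) : ℕ) : ℚ_[p]) := by push_cast; rfl
    rw [hcast]
    exact norm_nat_le_inv_of_dvd hdvd
  · refine my_norm_sum_le (by positivity) fun i hi => ?_
    rw [key i (mem_range.mp hi), norm_mul]
    have h1 : ‖((g i : ℚ_[p])⁻¹)^2‖ = 1 := by
      rw [norm_pow, norm_nat_inv_eq_one (hg i (mem_range.mp hi)), one_pow]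
    rw [h1, one_mul, norm_sub_rev]
    exact norm_fermat (hg i (mem_range.mp hi))

lemma wolstenholme (hm : p = 2*m+1) (hp5 : 5 ≤ p) :
    ‖∑ j ∈ range (2*m), ((j+1 : ℕ) : ℚ_[p])⁻¹‖ ≤ (p:ℝ)⁻¹ * (p:ℝ)⁻¹ := by
  have hpR : (0:ℝ) < p := by
    have : (5:ℝ) ≤ p := by exact_mod_cast hp5
    linarith
  have hnd1 : ∀ i, i < m → ¬ p ∣ (i+1) := by
    intro i hi h
    have := Nat.le_of_dvd (by omega) h
    omega
  have hnd2 : ∀ i, i < m → ¬ p ∣ (2*m-1-i+1) := by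
    intro i hi h
    have := Nat.le_of_dvd (by omega) h
    omega
  have hterm : ∀ i ∈ range m,
      (((i+1:ℕ) : ℚ_[p])⁻¹ + ((2*m-1-i+1 : ℕ) : ℚ_[p])⁻¹)
        = (p:ℚ_[p]) * (((i+1:ℕ) : ℚ_[p])⁻¹ * ((2*m-1-i+1 : ℕ) : ℚ_[p])⁻¹) := by
    intro i hi
    have hi' : i < m := mem_range.mp hi
    have ha : ((i+1:ℕ) : ℚ_[p]) ≠ 0 := nat_ne_zero_K (hnd1 i hi')
    have hb : ((2*m-1-i+1:ℕ) : ℚ_[p]) ≠ 0 := nat_ne_zero_K (hnd2 i hi')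
    have hab : ((i+1:ℕ) : ℚ_[p]) + ((2*m-1-i+1:ℕ) : ℚ_[p]) = (p:ℚ_[p]) := by
      rw [← Nat.cast_add]
      congr 1
      omega
    rw [my_inv_add_inv ha hb, hab]
  rw [sum_range_two_mul_reflect m (fun j => ((j+1 : ℕ) : ℚ_[p])⁻¹)]
  rw [Finset.sum_congr rfl hterm, ← Finset.mul_sum, norm_mul, Padic.norm_p]
  refine mul_le_mul_of_nonneg_left ?_ (by positivity)
  -- ‖∑ a⁻¹ b⁻¹‖ ≤ p⁻¹
  have hsplit : ∑ i ∈ range m, (((i+1:ℕ) : ℚ_[p])⁻¹ * ((2*m-1-i+1 : ℕ) : ℚ_[p])⁻¹)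
      = (∑ i ∈ range m, ((((i+1:ℕ) : ℚ_[p])⁻¹ * ((2*m-1-i+1 : ℕ) : ℚ_[p])⁻¹)
          + (((i+1:ℕ) : ℚ_[p])⁻¹)^2))
        - ∑ i ∈ range m, (((i+1:ℕ) : ℚ_[p])⁻¹)^2 := by
    rw [← Finset.sum_sub_distrib]
    exact Finset.sum_congr rfl fun i _ => by ring
  rw [hsplit]
  refine le_trans (nonarch_sub _ _) (max_le ?_ ?_)
  · refine my_norm_sum_le (by positivity) fun i hi => ?_
    have hi' : i < m := mem_range.mp hi
    have heq : (((i+1:ℕ) : ℚ_[p])⁻¹ * ((2*m-1-i+1 : ℕ) : ℚ_[p])⁻¹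
          + (((i+1:ℕ) : ℚ_[p])⁻¹)^2)
        = ((i+1:ℕ) : ℚ_[p])⁻¹ * ((p:ℚ_[p]) * (((i+1:ℕ) : ℚ_[p])⁻¹
            * ((2*m-1-i+1 : ℕ) : ℚ_[p])⁻¹)) := by
      rw [← hterm i hi]
      ring
    have h1 := norm_nat_inv_eq_one (p:=p) (hnd1 i hi')
    have h2 := norm_nat_inv_eq_one (p:=p) (hnd2 i hi')
    rw [heq, norm_mul, h1, one_mul, norm_mul, Padic.norm_p, norm_mul, h1, h2]
    norm_num
  · exact norm_inv_sq_sum_le hp5 (fun i => i+1) m hnd1 (nat_dvd_half_sum hm hp5)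

theorem main_norm (hm : p = 2*m+1) (hp5 : 5 ≤ p) :
    ‖(∑ i ∈ range m, ((i+1 : ℕ) : ℚ_[p])⁻¹)
      + 2 * (((2:ℚ_[p])^(p-1) - 1) / (p:ℚ_[p]))
      - (p:ℚ_[p]) * (((2:ℚ_[p])^(p-1) - 1) / (p:ℚ_[p]))^2‖
      ≤ (p:ℝ)⁻¹ * (p:ℝ)⁻¹ := by
  have hpR : (0:ℝ) < p := by
    have : (5:ℝ) ≤ p := by exact_mod_cast hp5
    linarith
  have hpinv1 : (p:ℝ)⁻¹ ≤ 1 := by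
    rw [inv_le_one_iff₀]
    right
    have : (5:ℝ) ≤ p := by exact_mod_cast hp5
    linarith
  have hpK : (p:ℚ_[p]) ≠ 0 := by
    have : ‖(p:ℚ_[p])‖ ≠ 0 := by rw [Padic.norm_p]; positivity
    exact fun h => this (by rw [h, norm_zero])
  have hnd_odd : ∀ i, i < m → ¬ p ∣ (2*i+1) := by
    intro i hi h
    have := Nat.le_of_dvd (by omega) h
    omega
  have hnd1 : ∀ i, i < m → ¬ p ∣ (i+1) := by
    intro i hi h
    have := Nat.le_of_dvd (by omega) h
    omega
  have h2nd : ¬ p ∣ 2 := fun h => by have := Nat.le_of_dvd (by norm_num) h; omega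
  set Q : ℚ_[p] := ((2:ℚ_[p])^(p-1) - 1) / (p:ℚ_[p]) with hQdef
  set u : ℕ → ℚ_[p] := fun i => ((2*i+1 : ℕ) : ℚ_[p])⁻¹ with hudef
  set O : ℚ_[p] := ∑ i ∈ range m, u i with hOdef
  set T : ℚ_[p] := ∑ i ∈ range m, u i * ∑ j ∈ range i, u j with hTdef
  set H : ℚ_[p] := ∑ i ∈ range m, ((i+1 : ℕ) : ℚ_[p])⁻¹ with hHdef
  have hu_norm : ∀ i, i < m → ‖u i‖ = 1 := fun i hi => norm_nat_inv_eq_one (hnd_odd i hi)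
  have hu_ne : ∀ i, i < m → ((2*i+1 : ℕ) : ℚ_[p]) ≠ 0 := fun i hi => nat_ne_zero_K (hnd_odd i hi)
  -- exact product identity
  have hKid : ∏ i ∈ range m, (((2*m+1) + (2*i+1) : ℕ) : ℚ_[p])
      = 2^(2*m) * ∏ i ∈ range m, ((2*i+1 : ℕ) : ℚ_[p]) := by
    exact_mod_cast congrArg (Nat.cast : ℕ → ℚ_[p]) (nat_prod_identity m)
  have hprod_ne : ∏ i ∈ range m, ((2*i+1 : ℕ) : ℚ_[p]) ≠ 0 :=
    Finset.prod_ne_zero_iff.mpr fun i hi => hu_ne i (mem_range.mp hi)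
  have Kprod : ∏ i ∈ range m, (1 + (p:ℚ_[p]) * u i) = (2:ℚ_[p])^(p-1) := by
    have hfac : ∀ i ∈ range m, (1 + (p:ℚ_[p]) * u i)
        = (((2*m+1) + (2*i+1) : ℕ) : ℚ_[p]) * ((2*i+1 : ℕ) : ℚ_[p])⁻¹ := by
      intro i hi
      have hr := hu_ne i (mem_range.mp hi)
      have hcast : (((2*m+1) + (2*i+1) : ℕ) : ℚ_[p])
          = (p:ℚ_[p]) + ((2*i+1 : ℕ) : ℚ_[p]) := by
        rw [Nat.cast_add]
        congr 1
        exact (congrArg (fun n : ℕ => (n : ℚ_[p])) hm).symm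
      rw [hcast, add_mul, mul_inv_cancel₀ hr, hudef]
      ring
    rw [Finset.prod_congr rfl hfac, Finset.prod_mul_distrib, Finset.prod_inv_distrib,
      hKid, mul_assoc, mul_inv_cancel₀ hprod_ne, mul_one]
    congr 1
    omega
  -- expansion
  set z : ℕ → ℚ_[p] := fun i => (p:ℚ_[p]) * u i with hzdef
  have hznorm : ∀ i, i < m → ‖z i‖ ≤ (p:ℝ)⁻¹ := by
    intro i hi
    rw [hzdef]
    simp only []
    rw [norm_mul, Padic.norm_p, hu_norm i hi, mul_one]
  have hexp := prod_expand m z (by positivity) hpinv1 hznorm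
  have hSz : ∑ i ∈ range m, z i = (p:ℚ_[p]) * O := by
    rw [hOdef, Finset.mul_sum]
  have hpair : ∑ i ∈ range m, z i * ∑ j ∈ range i, z j = (p:ℚ_[p])^2 * T := by
    rw [hTdef, Finset.mul_sum]
    refine Finset.sum_congr rfl fun i _ => ?_
    rw [show ∑ j ∈ range i, z j = (p:ℚ_[p]) * ∑ j ∈ range i, u j by rw [Finset.mul_sum]]
    ring
  have hQeq : (2:ℚ_[p])^(p-1) = 1 + (p:ℚ_[p]) * Q := by
    rw [hQdef, mul_div_cancel₀ _ hpK]
    ring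
  have hrw : (∏ i ∈ range m, (1 + z i)) - (1 + (∑ i ∈ range m, z i)
      + ∑ i ∈ range m, z i * ∑ j ∈ range i, z j)
      = (p:ℚ_[p]) * (Q - O - (p:ℚ_[p])*T) := by
    rw [Kprod, hSz, hpair]
    linear_combination hQeq
  rw [hrw, norm_mul, Padic.norm_p] at hexp
  have key1 : ‖Q - O - (p:ℚ_[p])*T‖ ≤ (p:ℝ)⁻¹ * (p:ℝ)⁻¹ := by
    have h := mul_le_mul_of_nonneg_left hexp hpR.le
    calc ‖Q - O - (p:ℚ_[p])*T‖
        = (p:ℝ) * ((p:ℝ)⁻¹ * ‖Q - O - (p:ℚ_[p])*T‖) := by field_simp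
      _ ≤ (p:ℝ) * ((p:ℝ)⁻¹^3) := h
      _ = (p:ℝ)⁻¹ * (p:ℝ)⁻¹ := by field_simp
  -- basic norm bounds
  have hOn : ‖O‖ ≤ 1 := my_norm_sum_le zero_le_one fun i hi => le_of_eq (hu_norm i (mem_range.mp hi))
  have hTn : ‖T‖ ≤ 1 := by
    refine my_norm_sum_le zero_le_one fun i hi => ?_
    rw [norm_mul]
    have h1 : ‖u i‖ ≤ 1 := le_of_eq (hu_norm i (mem_range.mp hi))
    have h2 : ‖∑ j ∈ range i, u j‖ ≤ 1 := my_norm_sum_le zero_le_one fun j hj =>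
      le_of_eq (hu_norm j (by have := mem_range.mp hj; have := mem_range.mp hi; omega))
    calc ‖u i‖ * ‖∑ j ∈ range i, u j‖ ≤ 1 * 1 :=
          mul_le_mul h1 h2 (norm_nonneg _) zero_le_one
      _ = 1 := one_mul _
  have h2cast : ((2:ℕ) : ℚ_[p]) = (2:ℚ_[p]) := by norm_cast
  have hQn : ‖Q‖ ≤ 1 := by
    rw [hQdef, norm_div, Padic.norm_p]
    have hf : ‖(2:ℚ_[p])^(p-1) - 1‖ ≤ (p:ℝ)⁻¹ := by
      rw [← h2cast]
      exact norm_fermat h2nd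
    rw [div_eq_mul_inv, inv_inv]
    calc ‖(2:ℚ_[p])^(p-1) - 1‖ * (p:ℝ) ≤ (p:ℝ)⁻¹ * (p:ℝ) :=
          mul_le_mul_of_nonneg_right hf hpR.le
      _ = 1 := by field_simp
  have hpTn : ‖(p:ℚ_[p])*T‖ ≤ (p:ℝ)⁻¹ := by
    rw [norm_mul, Padic.norm_p]
    calc (p:ℝ)⁻¹ * ‖T‖ ≤ (p:ℝ)⁻¹ * 1 := mul_le_mul_of_nonneg_left hTn (by positivity)
      _ = (p:ℝ)⁻¹ := mul_one _
  have hOQ : ‖O - Q‖ ≤ (p:ℝ)⁻¹ := by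
    have heq : O - Q = -(Q - O - (p:ℚ_[p])*T) - (p:ℚ_[p])*T := by ring
    rw [heq]
    refine le_trans (nonarch_sub _ _) (max_le ?_ hpTn)
    rw [norm_neg]
    calc ‖Q - O - (p:ℚ_[p])*T‖ ≤ (p:ℝ)⁻¹ * (p:ℝ)⁻¹ := key1
      _ ≤ 1 * (p:ℝ)⁻¹ := mul_le_mul_of_nonneg_right hpinv1 (by positivity)
      _ = (p:ℝ)⁻¹ := one_mul _
  have hO2 : ‖∑ i ∈ range m, (u i)^2‖ ≤ (p:ℝ)⁻¹ :=
    norm_inv_sq_sum_le hp5 (fun i => 2*i+1) m hnd_odd (nat_dvd_odd_sum hm hp5)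
  have h2T : 2*T = O^2 - ∑ i ∈ range m, (u i)^2 := two_mul_pairsum m u
  have key2 : ‖2*T - Q^2‖ ≤ (p:ℝ)⁻¹ := by
    have hrw2 : 2*T - Q^2 = (O - Q)*(O + Q) - ∑ i ∈ range m, (u i)^2 := by
      linear_combination h2T
    rw [hrw2]
    refine le_trans (nonarch_sub _ _) (max_le ?_ hO2)
    rw [norm_mul]
    have hOQn : ‖O + Q‖ ≤ 1 := le_trans (Padic.nonarchimedean _ _) (max_le hOn hQn)
    calc ‖O - Q‖ * ‖O + Q‖ ≤ (p:ℝ)⁻¹ * 1 :=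
          mul_le_mul hOQ hOQn (norm_nonneg _) (by positivity)
      _ = (p:ℝ)⁻¹ := mul_one _
  -- even-odd split
  have hsplit : ∑ j ∈ range (2*m), ((j+1 : ℕ) : ℚ_[p])⁻¹
      = O + ∑ i ∈ range m, ((2*i+1+1 : ℕ) : ℚ_[p])⁻¹ := by
    rw [sum_range_two_mul m (fun j => ((j+1 : ℕ) : ℚ_[p])⁻¹), hOdef]
  have h2E : 2 * ∑ i ∈ range m, ((2*i+1+1 : ℕ) : ℚ_[p])⁻¹ = H := by
    rw [Finset.mul_sum, hHdef]
    refine Finset.sum_congr rfl fun i _ => ?_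
    have hc : ((2*i+1+1 : ℕ) : ℚ_[p]) = 2 * ((i+1 : ℕ) : ℚ_[p]) := by push_cast; ring
    rw [hc, mul_inv]
    rw [← mul_assoc, mul_inv_cancel₀ (two_ne_zero), one_mul]
  set Hfull : ℚ_[p] := ∑ j ∈ range (2*m), ((j+1 : ℕ) : ℚ_[p])⁻¹ with hHfulldef
  have hWol : ‖Hfull‖ ≤ (p:ℝ)⁻¹ * (p:ℝ)⁻¹ := wolstenholme hm hp5
  have hH : H = 2*Hfull - 2*O := by
    rw [← h2E, hsplit]
    ring
  have keyfinal : H + 2*Q - (p:ℚ_[p])*Q^2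
      = 2*(Q - O - (p:ℚ_[p])*T) + 2*Hfull + (p:ℚ_[p])*(2*T - Q^2) := by
    rw [hH]
    ring
  rw [keyfinal]
  have h2norm : ‖(2:ℚ_[p])‖ = 1 := by
    rw [← h2cast]
    exact norm_nat_eq_one h2nd
  refine le_trans (Padic.nonarchimedean _ _) (max_le (le_trans (Padic.nonarchimedean _ _) (max_le ?_ ?_)) ?_)
  · rw [norm_mul, h2norm, one_mul]
    exact key1
  · rw [norm_mul, h2norm, one_mul]
    exact hWol
  · rw [norm_mul, Padic.norm_p]
    exact mul_le_mul_of_nonneg_left key2 (by positivity)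

end core

theorem stmt12 (p : ℕ) (hp : p.Prime) (hp5 : 5 ≤ p) :
    padicNorm p
      ((∑ j ∈ Finset.Icc 1 ((p - 1) / 2), (1 : ℚ) / j)
        - (-2 * (((2 : ℚ) ^ (p - 1) - 1) / p)
            + (p : ℚ) * (((2 : ℚ) ^ (p - 1) - 1) / p) ^ 2))
      ≤ (p : ℚ) ^ (-2 : ℤ) := by
  haveI : Fact p.Prime := ⟨hp⟩
  obtain ⟨k, hk⟩ := hp.odd_of_ne_two (by omega)
  set m := (p - 1) / 2 with hmdef
  have hm : p = 2*m + 1 := by omega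
  set Δ : ℚ := (∑ j ∈ Finset.Icc 1 m, (1 : ℚ) / j)
        - (-2 * (((2 : ℚ) ^ (p - 1) - 1) / p)
            + (p : ℚ) * (((2 : ℚ) ^ (p - 1) - 1) / p) ^ 2) with hD
  have hsum : ((∑ j ∈ Finset.Icc 1 m, (1:ℚ)/j : ℚ) : ℚ_[p])
      = ∑ i ∈ range m, ((i+1 : ℕ) : ℚ_[p])⁻¹ := by
    push_cast [one_div]
    rw [sum_Icc_one m (fun j => ((j:ℕ) : ℚ_[p])⁻¹)]
    push_cast
    rfl
  have hcast : ((Δ : ℚ) : ℚ_[p]) = (∑ i ∈ range m, ((i+1 : ℕ) : ℚ_[p])⁻¹)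
      + 2 * (((2:ℚ_[p])^(p-1) - 1) / (p:ℚ_[p]))
      - (p:ℚ_[p]) * (((2:ℚ_[p])^(p-1) - 1) / (p:ℚ_[p]))^2 := by
    rw [hD, Rat.cast_sub, hsum]
    push_cast
    ring
  have hmain := main_norm (p := p) (m := m) hm hp5
  rw [← hcast] at hmain
  have hnorm : ‖((Δ : ℚ) : ℚ_[p])‖ = ((padicNorm p Δ : ℚ) : ℝ) := Padic.eq_padicNorm Δ
  have hrhs : (((p:ℚ)) ^ (-2:ℤ) : ℝ) = (p:ℝ)⁻¹ * (p:ℝ)⁻¹ := by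
    push_cast
    rw [zpow_neg, zpow_two, mul_inv]
  have hfin : ((padicNorm p Δ : ℚ) : ℝ) ≤ (((p:ℚ)) ^ (-2:ℤ) : ℝ) := by
    rw [← hnorm, hrhs]
    exact hmain
  exact_mod_cast hfin
end

section
/- For any prime p ≥ 5, the sum over k from 1 to (p-1)/2 of 1/(2k-1)^2 is congruent to 0 modulo p. -/
open Finset

-- split a sum over Icc 1 (2n) into odd and even parts
lemma aux_split {M : Type*} [AddCommMonoid M] (g : ℕ → M) (n : ℕ) :
    ∑ j ∈ Finset.Icc 1 (2 * n), g j
      = ∑ k ∈ Finset.Icc 1 n, g (2 * k - 1) + ∑ k ∈ Finset.Icc 1 n, g (2 * k) := by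
  induction n with
  | zero => simp
  | succ n ih =>
    have h1 : 2 * (n + 1) = (2 * n + 1) + 1 := by ring
    rw [h1, Finset.sum_Icc_succ_top (by omega), Finset.sum_Icc_succ_top (by omega),
      Finset.sum_Icc_succ_top (by omega) (fun k => g (2 * k - 1)),
      Finset.sum_Icc_succ_top (by omega) (fun k => g (2 * k)), ih]
    have e1 : 2 * (n + 1) - 1 = 2 * n + 1 := by omega
    have e2 : 2 * (n + 1) = 2 * n + 1 + 1 := by omega
    rw [e1, ← e2]
    abel

lemma aux_zmod (p : ℕ) (hp : p.Prime) (hp5 : 5 ≤ p) :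
    ∑ k ∈ Finset.Icc 1 ((p - 1) / 2), (((2 * k - 1 : ℕ) : ZMod p))⁻¹ ^ 2 = 0 := by
  haveI : Fact p.Prime := ⟨hp⟩
  have hodd : p % 2 = 1 := Nat.odd_iff.mp (hp.odd_of_ne_two (by omega))
  set n := (p - 1) / 2 with hn
  have h2n : 2 * n = p - 1 := by omega
  set F : ZMod p → ZMod p := fun x => x⁻¹ ^ 2 with hF
  set T := ∑ k ∈ Finset.Icc 1 n, F ((2 * k - 1 : ℕ) : ZMod p) with hT
  -- even-indexed sum equals the odd-indexed sum T
  have heven : ∑ k ∈ Finset.Icc 1 n, F ((2 * k : ℕ) : ZMod p) = T := by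
    rw [hT]
    refine Finset.sum_nbij' (fun k => n + 1 - k) (fun k => n + 1 - k)
      (fun k hk => ?_) (fun k hk => ?_) (fun k hk => ?_) (fun k hk => ?_)
      (fun k hk => ?_)
    · simp only [Finset.mem_Icc] at *; omega
    · simp only [Finset.mem_Icc] at *; omega
    · simp only [Finset.mem_Icc] at hk; omega
    · simp only [Finset.mem_Icc] at hk; omega
    · simp only [Finset.mem_Icc] at hk
      have e1 : (2 * k : ℕ) = (2 * n + 1 : ℕ) - (2 * (n + 1 - k) - 1) := by omega
      have e2 : (2 * (n + 1 - k) - 1 : ℕ) ≤ 2 * n + 1 := by omega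
      have hcast : ((2 * k : ℕ) : ZMod p) = -(((2 * (n + 1 - k) - 1 : ℕ)) : ZMod p) := by
        rw [e1, Nat.cast_sub e2]
        have : ((2 * n + 1 : ℕ) : ZMod p) = 0 := by
          have : (2 * n + 1 : ℕ) = p := by omega
          rw [this, ZMod.natCast_self]
        rw [this]; ring
      rw [hcast, hF]
      simp [inv_neg, neg_pow]
  -- the full sum over 1..p-1
  have hfull : T + T = ∑ j ∈ Finset.Icc 1 (p - 1), F ((j : ℕ) : ZMod p) := by
    have := aux_split (fun j => F ((j : ℕ) : ZMod p)) n
    rw [h2n] at this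
    rw [this, heven, hT]
  -- the full sum equals the sum over all of ZMod p
  have huniv : ∑ j ∈ Finset.Icc 1 (p - 1), F ((j : ℕ) : ZMod p) = ∑ x : ZMod p, F x := by
    have h0 : F 0 = 0 := by simp [hF]
    have : ∑ x : ZMod p, F x = ∑ j ∈ Finset.range p, F ((j : ℕ) : ZMod p) := by
      refine Finset.sum_nbij' (fun x => x.val) (fun j => (j : ZMod p))
        (fun x _ => Finset.mem_range.mpr (ZMod.val_lt x)) (fun j _ => Finset.mem_univ _)
        (fun x _ => ZMod.natCast_rightInverse x) (fun j hj => ZMod.val_cast_of_lt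
          (Finset.mem_range.mp hj)) (fun x _ => by rw [ZMod.natCast_rightInverse x])
    rw [this]
    have hIcc : Finset.Icc 1 (p - 1) = Finset.Ico 1 p := by
      rw [← Finset.Ico_add_one_right_eq_Icc]
      congr 1
      omega
    rw [hIcc]
    rw [Finset.range_eq_Ico, Finset.sum_eq_sum_Ico_succ_bot hp.pos]
    simp [h0]
  -- sum over all of ZMod p is zero
  have hzero : ∑ x : ZMod p, F x = 0 := by
    have hbij : ∑ x : ZMod p, F x = ∑ x : ZMod p, x ^ 2 := by
      refine Finset.sum_nbij' (fun x => x⁻¹) (fun x => x⁻¹)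
        (fun x _ => Finset.mem_univ _) (fun x _ => Finset.mem_univ _)
        (fun x _ => inv_inv x) (fun x _ => inv_inv x) (fun x _ => rfl)
    rw [hbij]
    have hcard : 2 < Fintype.card (ZMod p) - 1 := by rw [ZMod.card]; omega
    exact FiniteField.sum_pow_lt_card_sub_one (K := ZMod p) 2 hcard
  have h2T : T + T = 0 := by rw [hfull, huniv, hzero]
  have h2 : (2 : ZMod p) ≠ 0 := by
    intro h
    have h' : ((2 : ℕ) : ZMod p) = 0 := by exact_mod_cast h
    rw [ZMod.natCast_eq_zero_iff] at h'
    have := Nat.le_of_dvd (by norm_num) h'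
    omega
  have : (2 : ZMod p) * T = 0 := by rw [two_mul]; exact h2T
  rcases mul_eq_zero.mp this with h | h
  · exact absurd h h2
  · exact h

theorem stmt14 (p : ℕ) (hp : p.Prime) (hp5 : 5 ≤ p) :
    padicNorm p (∑ k ∈ Finset.Icc 1 ((p - 1) / 2), (1 : ℚ) / (2 * (k : ℚ) - 1) ^ 2)
      ≤ (p : ℚ) ^ (-1 : ℤ) := by
  haveI : Fact p.Prime := ⟨hp⟩
  have hodd : p % 2 = 1 := Nat.odd_iff.mp (hp.odd_of_ne_two (by omega))
  set n := (p - 1) / 2 with hn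
  set S : ℚ := ∑ k ∈ Finset.Icc 1 n, (1 : ℚ) / (2 * (k : ℚ) - 1) ^ 2 with hS
  have hnorm : ∀ k ∈ Finset.Icc 1 n, ‖((2 * k - 1 : ℕ) : ℤ_[p])‖ = 1 := by
    intro k hk
    simp only [Finset.mem_Icc] at hk
    refine le_antisymm (PadicInt.norm_le_one _) ?_
    by_contra h
    push_neg at h
    have hcast : ((2 * k - 1 : ℕ) : ℤ_[p]) = (((2 * k - 1 : ℕ) : ℤ) : ℤ_[p]) := by
      push_cast; ring
    rw [hcast, PadicInt.norm_int_lt_one_iff_dvd] at h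
    have hdvd : p ∣ 2 * k - 1 := by exact_mod_cast h
    have h1 : 1 ≤ 2 * k - 1 := by omega
    have := Nat.le_of_dvd (by omega) hdvd
    omega
  set z : ℤ_[p] := ∑ k ∈ Finset.Icc 1 n, (((2 * k - 1 : ℕ) : ℤ_[p]).inv) ^ 2 with hz
  -- z maps to 0 in ZMod p
  have hker : PadicInt.toZMod z = 0 := by
    rw [hz, map_sum PadicInt.toZMod]
    have : ∀ k ∈ Finset.Icc 1 n,
        PadicInt.toZMod ((((2 * k - 1 : ℕ) : ℤ_[p]).inv) ^ 2)
          = (((2 * k - 1 : ℕ) : ZMod p))⁻¹ ^ 2 := by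
      intro k hk
      rw [map_pow]
      congr 1
      have hmul := PadicInt.mul_inv (hnorm k hk)
      have := congrArg PadicInt.toZMod hmul
      rw [map_mul, map_one, map_natCast] at this
      exact (inv_eq_of_mul_eq_one_right this).symm
    rw [Finset.sum_congr rfl this]
    exact aux_zmod p hp hp5
  -- hence ‖z‖ ≤ p⁻¹
  have hznorm : ‖z‖ ≤ (p : ℝ) ^ (-1 : ℤ) := by
    have hmem : z ∈ RingHom.ker (PadicInt.toZMod : ℤ_[p] →+* ZMod p) := hker
    rw [PadicInt.ker_toZMod, PadicInt.maximalIdeal_eq_span_p] at hmem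
    have := (PadicInt.norm_le_pow_iff_mem_span_pow z 1).mpr (by simpa using hmem)
    simpa using this
  -- (z : ℚ_[p]) equals the cast of S
  have hcoe : ((z : ℤ_[p]) : ℚ_[p]) = ((S : ℚ) : ℚ_[p]) := by
    rw [hz, hS, Rat.cast_sum]
    rw [show (((∑ k ∈ Finset.Icc 1 n, (((2 * k - 1 : ℕ) : ℤ_[p]).inv) ^ 2 : ℤ_[p])) : ℚ_[p])
        = ∑ k ∈ Finset.Icc 1 n, (((((2 * k - 1 : ℕ) : ℤ_[p]).inv) ^ 2 : ℤ_[p]) : ℚ_[p])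
      from map_sum (PadicInt.Coe.ringHom) _ _]
    refine Finset.sum_congr rfl (fun k hk => ?_)
    push_cast
    simp only [Finset.mem_Icc] at hk
    have hmul := PadicInt.mul_inv (hnorm k (Finset.mem_Icc.mpr hk))
    have hmul' := congrArg (fun x : ℤ_[p] => (x : ℚ_[p])) hmul
    push_cast at hmul'
    have hinv : ((((2 * k - 1 : ℕ) : ℤ_[p]).inv : ℤ_[p]) : ℚ_[p])
        = (((2 * k - 1 : ℕ) : ℚ_[p]))⁻¹ := (inv_eq_of_mul_eq_one_right hmul').symm
    rw [hinv]
    have hc : ((2 * k - 1 : ℕ) : ℚ_[p]) = 2 * (k : ℚ_[p]) - 1 := by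
      have : (1 : ℕ) ≤ 2 * k := by omega
      push_cast [Nat.cast_sub this]
      ring
    rw [hc, inv_pow, one_div]
  -- conclude
  have hfin : ((padicNorm p S : ℚ) : ℝ) ≤ (p : ℝ) ^ (-1 : ℤ) := by
    rw [← Padic.eq_padicNorm, ← hcoe, PadicInt.padic_norm_e_of_padicInt]
    exact hznorm
  have hfin2 : ((padicNorm p S : ℚ) : ℝ) ≤ (((p : ℚ) ^ (-1 : ℤ) : ℚ) : ℝ) := by
    push_cast
    exact hfin
  exact Rat.cast_le.mp hfin2
end

section
/- For any prime p ≥ 5, the central binomial coefficient binomial(p-1, (p-1)/2) is congruent to (-1)^((p-1)/2) (1 + 2p q_p(2) + p^2 q_p(2)^2) modulo p^3, where q_p(2) = (2^(p-1)-1)/p. -/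
open Finset

/-- Generic expansion: if t³ = 0 then 2·∏(1 - t·xₖ) = 2 - 2t·Σx + t²((Σx)² - Σx²). -/
lemma prod_one_sub_expand {R : Type*} [CommRing R] (t : R) (ht : t ^ 3 = 0)
    (s : Finset ℕ) (x : ℕ → R) :
    2 * ∏ k ∈ s, (1 - t * x k) =
      2 - 2 * t * (∑ k ∈ s, x k) + t ^ 2 * ((∑ k ∈ s, x k) ^ 2 - ∑ k ∈ s, (x k) ^ 2) := by
  induction s using Finset.induction_on with
  | empty => simp
  | insert _ _ ha ih =>
    rename_i a s'
    rw [Finset.prod_insert ha, Finset.sum_insert ha, Finset.sum_insert ha]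
    linear_combination (1 - t * x a) * ih + (- x a * ((∑ k ∈ s', x k) ^ 2 - ∑ k ∈ s', (x k) ^ 2)) * ht

/-- (∏_{i<n} (2i+1)) · 2ⁿ · n! = (2n)!. -/
lemma odd_prod_mul (n : ℕ) : (∏ i ∈ range n, (2 * i + 1)) * (2 ^ n * n.factorial) = (2 * n).factorial := by
  induction n with
  | zero => simp
  | succ k ih =>
    rw [Finset.prod_range_succ, Nat.factorial_succ, pow_succ]
    have h2 : 2 * (k + 1) = (2 * k + 1) + 1 := by ring
    rw [h2, Nat.factorial_succ, Nat.factorial_succ, ← ih]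
    ring

lemma half_inv_sq_sum (p : ℕ) (hp : p.Prime) (hp5 : 5 ≤ p) (m : ℕ) (hm : p = 2 * m + 1) :
    ∑ i ∈ range m, (((i + 1 : ℕ) : ZMod p))⁻¹ ^ 2 = 0 := by
  haveI : Fact p.Prime := ⟨hp⟩
  set F := ZMod p
  set T := ∑ i ∈ range m, (((i + 1 : ℕ) : F))⁻¹ ^ 2 with hT
  have hfull : ∑ x : F, (x⁻¹) ^ 2 = 0 := by
    have h1 : ∑ x : F, x ^ 2 = ∑ x : F, (x⁻¹) ^ 2 :=
      Fintype.sum_bijective Inv.inv (Function.Involutive.bijective (fun x => inv_inv x)) _ _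
        (fun x => by rw [inv_inv])
    rw [← h1]
    apply FiniteField.sum_pow_lt_card_sub_one
    rw [ZMod.card]; omega
  have hbij : ∑ x : F, (x⁻¹) ^ 2 = ∑ i ∈ range p, (((i : ℕ) : F))⁻¹ ^ 2 := by
    apply Finset.sum_nbij' (fun x : F => x.val) (fun i : ℕ => ((i : ℕ) : F))
    · intro x _; exact Finset.mem_range.2 (ZMod.val_lt x)
    · intro i _; exact Finset.mem_univ _
    · intro x _; rw [ZMod.natCast_zmod_val]
    · intro i hi; rw [ZMod.val_cast_of_lt (Finset.mem_range.1 hi)]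
    · intro x _; rw [ZMod.natCast_zmod_val]
  have hsplit : ∑ i ∈ range p, (((i : ℕ) : F))⁻¹ ^ 2 = T + T := by
    have h0 : ∑ i ∈ range p, (((i : ℕ) : F))⁻¹ ^ 2
        = ∑ i ∈ range (2 * m), (((i + 1 : ℕ) : F))⁻¹ ^ 2 := by
      rw [show range p = range (2 * m + 1) from by rw [hm], Finset.sum_range_succ']
      simp
    rw [h0, two_mul, Finset.sum_range_add]
    congr 1
    have h2 : ∀ i ∈ range m, (((m + i + 1 : ℕ) : F))⁻¹ ^ 2 = (((m - 1 - i + 1 : ℕ) : F))⁻¹ ^ 2 := by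
      intro i hi
      have him := Finset.mem_range.1 hi
      have hsum : ((m + i + 1 : ℕ) : F) = -(((m - 1 - i + 1 : ℕ) : F)) := by
        have : ((m + i + 1 : ℕ) : F) + ((m - 1 - i + 1 : ℕ) : F) = 0 := by
          rw [← Nat.cast_add]
          have : (m + i + 1) + (m - 1 - i + 1) = p := by omega
          rw [this]; exact ZMod.natCast_self p
        exact eq_neg_of_add_eq_zero_left this
      rw [hsum, inv_neg, neg_pow]
      ring
    rw [Finset.sum_congr rfl (fun i hi => h2 i hi)]
    exact Finset.sum_range_reflect (fun j => (((j + 1 : ℕ) : F))⁻¹ ^ 2) m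
  have h2T : T + T = 0 := by rw [← hsplit, ← hbij, hfull]
  have h2ne : (2 : F) ≠ 0 := by
    intro h
    have h' : ((2 : ℕ) : F) = 0 := by exact_mod_cast h
    have hdvd := (ZMod.natCast_eq_zero_iff 2 p).1 h'
    have := Nat.le_of_dvd (by norm_num) hdvd
    omega
  have : (2 : F) * T = 0 := by rw [two_mul]; exact h2T
  rcases mul_eq_zero.1 this with h | h
  · exact absurd h h2ne
  · exact h


lemma sq_mul_eq_zero (p : ℕ) (hp : p.Prime) (x : ZMod (p^3))
    (h : (ZMod.castHom (dvd_pow_self p (by norm_num : (3:ℕ) ≠ 0)) (ZMod p)) x = 0) :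
    (p : ZMod (p^3))^2 * x = 0 := by
  haveI : NeZero (p^3) := ⟨pow_ne_zero 3 hp.ne_zero⟩
  have hx : x = ((x.val : ℕ) : ZMod (p^3)) := (ZMod.natCast_zmod_val x).symm
  have h2 : ((x.val : ℕ) : ZMod p) = 0 := by
    rw [hx] at h
    rwa [map_natCast] at h
  obtain ⟨w, hw⟩ := (ZMod.natCast_eq_zero_iff _ _).1 h2
  rw [hx, hw]
  have h3 : ((p:ZMod (p^3)))^2 * ((p * w : ℕ) : ZMod (p^3)) = ((p^3 * w : ℕ) : ZMod (p^3)) := by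
    push_cast; ring
  rw [h3, ZMod.natCast_eq_zero_iff]
  exact Dvd.intro w rfl

theorem stmt15 (p : ℕ) (hp : p.Prime) (hp5 : 5 ≤ p) (q : ℤ)
    (hq : (p : ℤ) * q = 2 ^ (p - 1) - 1) :
    (Nat.choose (p - 1) ((p - 1) / 2) : ℤ) ≡
      (-1) ^ ((p - 1) / 2) * (1 + 2 * (p : ℤ) * q + (p : ℤ) ^ 2 * q ^ 2)
      [ZMOD ((p : ℤ) ^ 3)] := by
  haveI : Fact p.Prime := ⟨hp⟩
  obtain ⟨m, hm⟩ : ∃ m, p = 2 * m + 1 := by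
    have h2 := hp.two_le
    rcases hp.odd_of_ne_two (by omega) with ⟨k, hk⟩
    exact ⟨k, by omega⟩
  have hm2 : (p - 1) / 2 = m := by omega
  have hm1 : p - 1 = 2 * m := by omega
  rw [hm2]
  have hcast : ((p:ℤ))^3 = ((p^3 : ℕ) : ℤ) := by push_cast; ring
  rw [hcast, ← ZMod.intCast_eq_intCast_iff]
  push_cast
  -- abbreviations
  set Pv := (p : ZMod (p^3)) with hPvdef
  set q' := ((q : ℤ) : ZMod (p^3)) with hq'def
  set S2 := ∑ i ∈ Finset.range m, ((2*(i+1) : ℕ) : ZMod (p^3))⁻¹ with hS2def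
  set Q2 := ∑ i ∈ Finset.range m, ((2*(i+1) : ℕ) : ZMod (p^3))⁻¹^2 with hQ2def
  set S := ∑ i ∈ Finset.range m, (((i+1) : ℕ) : ZMod (p^3))⁻¹ with hSdef
  set Q := ∑ i ∈ Finset.range m, (((i+1) : ℕ) : ZMod (p^3))⁻¹^2 with hQdef
  set MR := ((m.factorial : ℕ) : ZMod (p^3)) with hMRdef
  set CR := (((p-1).choose m : ℕ) : ZMod (p^3)) with hCRdef
  set descR := (((p-1).descFactorial m : ℕ) : ZMod (p^3)) with hdescRdef
  set OddR := (((∏ i ∈ Finset.range m, (2*i+1)) : ℕ) : ZMod (p^3)) with hOddRdef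
  set FR := (((p-1).factorial : ℕ) : ZMod (p^3)) with hFRdef
  set WR := ((2^m * m.factorial : ℕ) : ZMod (p^3)) with hWRdef
  set uR := ((-1 : ZMod (p^3)))^m with huRdef
  -- basic facts
  have hp3R : Pv^3 = 0 := by
    rw [hPvdef]
    have h := ZMod.natCast_self (p^3)
    push_cast at h
    exact h
  have hunit : ∀ k : ℕ, 1 ≤ k → k ≤ 2*m → ((k : ZMod (p^3)) * (k : ZMod (p^3))⁻¹ = 1) := by
    intro k h1 h2
    apply ZMod.mul_inv_of_unit
    rw [ZMod.isUnit_iff_coprime]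
    refine Nat.Coprime.pow_right 3 (Nat.coprime_comm.1 ((Nat.Prime.coprime_iff_not_dvd hp).2 ?_))
    intro hd
    have := Nat.le_of_dvd (by omega) hd
    omega
  have hterm : ∀ i ∈ Finset.range m,
      (((i+1:ℕ)) : ZMod (p^3))⁻¹ = 2 * ((2*(i+1):ℕ) : ZMod (p^3))⁻¹ := by
    intro i hi
    have him := Finset.mem_range.1 hi
    have h2u := hunit (2*(i+1)) (by omega) (by omega)
    apply ZMod.inv_eq_of_mul_eq_one (p^3) (((i+1:ℕ)) : ZMod (p^3)) _
    have hc : ((2*(i+1) : ℕ) : ZMod (p^3)) = 2 * (((i+1):ℕ) : ZMod (p^3)) := by push_cast; ring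
    linear_combination h2u - ((2*(i+1):ℕ) : ZMod (p^3))⁻¹ * hc
  have hSS2 : S = 2 * S2 := by
    rw [hSdef, hS2def, Finset.mul_sum]
    exact Finset.sum_congr rfl hterm
  have hQQ2 : Q = 4 * Q2 := by
    rw [hQdef, hQ2def, Finset.mul_sum]
    refine Finset.sum_congr rfl fun i hi => ?_
    rw [hterm i hi]; ring
  -- expansions
  have eqA : 2 * ∏ i ∈ Finset.range m, (1 - Pv * (((i+1):ℕ) : ZMod (p^3))⁻¹)
      = 2 - 2*Pv*S + Pv^2*(S^2 - Q) :=
    prod_one_sub_expand Pv hp3R (Finset.range m) (fun i => (((i+1):ℕ) : ZMod (p^3))⁻¹)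
  have eqB : 2 * ∏ i ∈ Finset.range m, (1 - Pv * ((2*(i+1):ℕ) : ZMod (p^3))⁻¹)
      = 2 - 2*Pv*S2 + Pv^2*(S2^2 - Q2) :=
    prod_one_sub_expand Pv hp3R (Finset.range m) (fun i => ((2*(i+1):ℕ) : ZMod (p^3))⁻¹)
  -- cast product identities
  have hMfact : MR = ∏ i ∈ Finset.range m, (((i+1):ℕ) : ZMod (p^3)) := by
    rw [hMRdef, ← Nat.cast_prod]
    congr 1
    exact (Finset.prod_range_add_one_eq_factorial m).symm
  have hWfact : WR = ∏ i ∈ Finset.range m, ((2*(i+1):ℕ) : ZMod (p^3)) := by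
    rw [hWRdef, ← Nat.cast_prod]
    congr 1
    rw [Finset.prod_mul_distrib, Finset.prod_const, Finset.card_range,
      Finset.prod_range_add_one_eq_factorial]
  have hprodA : (∏ i ∈ Finset.range m, (1 - Pv * (((i+1):ℕ) : ZMod (p^3))⁻¹)) * MR
      = uR * descR := by
    rw [hMfact, ← Finset.prod_mul_distrib]
    have h1 : ∀ i ∈ Finset.range m,
        (1 - Pv * (((i+1):ℕ) : ZMod (p^3))⁻¹) * (((i+1):ℕ) : ZMod (p^3))
        = (-1) * (((p - (i+1) : ℕ)) : ZMod (p^3)) := by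
      intro i hi
      have him := Finset.mem_range.1 hi
      have hu1 := hunit (i+1) (by omega) (by omega)
      rw [Nat.cast_sub (by omega : i+1 ≤ p)]
      rw [hPvdef]
      linear_combination (-(p:ZMod (p^3))) * hu1
    rw [Finset.prod_congr rfl h1, Finset.prod_mul_distrib, Finset.prod_const, Finset.card_range]
    congr 1
    rw [hdescRdef, ← Nat.cast_prod]
    congr 1
    rw [Nat.descFactorial_eq_prod_range]
    exact Finset.prod_congr rfl (fun i hi => by omega)
  have hprodB : (∏ i ∈ Finset.range m, (1 - Pv * ((2*(i+1):ℕ) : ZMod (p^3))⁻¹)) * WR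
      = uR * OddR := by
    rw [hWfact, ← Finset.prod_mul_distrib]
    have h1 : ∀ i ∈ Finset.range m,
        (1 - Pv * ((2*(i+1):ℕ) : ZMod (p^3))⁻¹) * ((2*(i+1):ℕ) : ZMod (p^3))
        = (-1) * (((p - 2*(i+1) : ℕ)) : ZMod (p^3)) := by
      intro i hi
      have him := Finset.mem_range.1 hi
      have hu1 := hunit (2*(i+1)) (by omega) (by omega)
      rw [Nat.cast_sub (by omega : 2*(i+1) ≤ p)]
      rw [hPvdef]
      linear_combination (-(p:ZMod (p^3))) * hu1
    rw [Finset.prod_congr rfl h1, Finset.prod_mul_distrib, Finset.prod_const, Finset.card_range]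
    congr 1
    rw [hOddRdef, ← Nat.cast_prod]
    congr 1
    have h2 : ∀ i ∈ Finset.range m, p - 2*(i+1) = 2*(m - 1 - i)+1 := by
      intro i hi
      have := Finset.mem_range.1 hi
      omega
    rw [Finset.prod_congr rfl h2]
    exact Finset.prod_range_reflect (fun j => 2*j+1) m
  -- nat identities, cast
  have hdesc : descR = MR * CR := by
    rw [hdescRdef, hMRdef, hCRdef, Nat.descFactorial_eq_factorial_mul_choose]
    push_cast; ring
  have hOF : OddR * WR = FR := by
    rw [hOddRdef, hWRdef, hFRdef, ← Nat.cast_mul]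
    congr 1
    rw [hm1]
    exact odd_prod_mul m
  have hFMC : FR = MR * (MR * CR) := by
    rw [← hdesc, hFRdef, hMRdef, hdescRdef, ← Nat.cast_mul]
    congr 1
    have h := Nat.factorial_mul_descFactorial (show m ≤ p-1 by omega)
    rw [show p-1-m = m by omega] at h
    exact h.symm
  have hWM : WR = 2^m * MR := by
    rw [hWRdef, hMRdef]; push_cast; ring
  -- units
  have hMunit : IsUnit MR := by
    rw [hMRdef, ZMod.isUnit_iff_coprime]
    refine Nat.Coprime.pow_right 3 (Nat.coprime_comm.1 ((Nat.Prime.coprime_iff_not_dvd hp).2 ?_))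
    rw [hp.dvd_factorial]
    omega
  have h2unit : IsUnit (2 : ZMod (p^3)) := by
    have hc : ((2:ℕ) : ZMod (p^3)) = (2 : ZMod (p^3)) := by push_cast; ring
    rw [← hc, ZMod.isUnit_iff_coprime]
    refine Nat.Coprime.pow_right 3 (Nat.coprime_comm.1 ((Nat.Prime.coprime_iff_not_dvd hp).2 ?_))
    intro hd
    have := Nat.le_of_dvd (by norm_num) hd
    omega
  -- q relation
  have hqR : Pv * q' = 2^(p-1) - 1 := by
    have h := hq
    apply_fun (fun z : ℤ => ((z : ZMod (p^3)))) at h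
    push_cast at h
    exact h
  have hpow : (2:ZMod (p^3))^m * (2:ZMod (p^3))^m = 1 + Pv * q' := by
    rw [← pow_add, show m + m = p - 1 from by omega]
    linear_combination -hqR
  -- core algebra
  have hE1 : 2 * uR * (MR * CR) = (2 - 2*Pv*S + Pv^2*(S^2 - Q)) * MR := by
    linear_combination MR * eqA - 2 * hprodA - 2 * uR * hdesc
  have hE2 : 2 * uR * (MR * (MR * CR))
      = (1 + Pv*q')*(2 - 2*Pv*S2 + Pv^2*(S2^2 - Q2))*(MR*MR) := by
    linear_combination WR^2 * eqB - 2*WR*hprodB - 2*uR*hOF - 2*uR*hFMC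
      + (2 - 2*Pv*S2 + Pv^2*(S2^2 - Q2))*(WR + 2^m*MR)*hWM
      + (2 - 2*Pv*S2 + Pv^2*(S2^2 - Q2))*MR^2*hpow
  have hMMXY : (MR*MR) * (2 - 2*Pv*S + Pv^2*(S^2-Q))
      = (MR*MR) * ((1 + Pv*q')*(2 - 2*Pv*S2 + Pv^2*(S2^2-Q2))) := by
    linear_combination hE2 - MR * hE1
  have hXY : (2 - 2*Pv*S + Pv^2*(S^2-Q))
      = (1 + Pv*q')*(2 - 2*Pv*S2 + Pv^2*(S2^2-Q2)) :=
    (hMunit.mul hMunit).mul_left_cancel hMMXY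
  -- Q2 vanishing
  have hQ2zero : Pv^2 * Q2 = 0 := by
    rw [hPvdef]
    apply sq_mul_eq_zero p hp
    rw [hQ2def, map_sum]
    have hterm2 : ∀ i ∈ Finset.range m,
        (ZMod.castHom (dvd_pow_self p (by norm_num : (3:ℕ) ≠ 0)) (ZMod p))
          (((2*(i+1):ℕ) : ZMod (p^3))⁻¹^2) = (((2*(i+1):ℕ) : ZMod p))⁻¹^2 := by
      intro i hi
      have him := Finset.mem_range.1 hi
      rw [map_pow]
      congr 1
      have h1 : ((2*(i+1):ℕ) : ZMod p) *
          (ZMod.castHom (dvd_pow_self p (by norm_num : (3:ℕ) ≠ 0)) (ZMod p))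
            (((2*(i+1):ℕ) : ZMod (p^3))⁻¹) = 1 := by
        rw [show ((2*(i+1):ℕ) : ZMod p) = (ZMod.castHom (dvd_pow_self p
            (by norm_num : (3:ℕ) ≠ 0)) (ZMod p)) ((2*(i+1):ℕ) : ZMod (p^3)) from
            (map_natCast _ _).symm, ← map_mul, hunit (2*(i+1)) (by omega) (by omega), map_one]
      exact (ZMod.inv_eq_of_mul_eq_one p _ _ h1).symm
    rw [Finset.sum_congr rfl hterm2]
    have h4 : ∀ i ∈ Finset.range m,
        (((2*(i+1):ℕ)) : ZMod p)⁻¹^2 = (2:ZMod p)⁻¹^2 * ((((i+1):ℕ)) : ZMod p)⁻¹^2 := by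
      intro i hi
      have hc : ((2*(i+1):ℕ) : ZMod p) = 2 * (((i+1):ℕ) : ZMod p) := by push_cast; ring
      rw [hc, mul_inv_rev]
      ring
    rw [Finset.sum_congr rfl h4, ← Finset.mul_sum, half_inv_sq_sum p hp hp5 m hm, mul_zero]
  -- final algebra
  have hpE : 2*Pv^2*S2 + 2*Pv^2*q' = 0 := by
    linear_combination (-Pv) * hXY + (-2*Pv^2 + Pv^3*S + 2*Pv^3*S2) * hSS2 + (-Pv^3) * hQQ2
      + (-3*Q2 + 2*S2*q' + 3*S2^2 + Pv*Q2*q' - Pv*S2^2*q') * hp3R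
  have hXfin : (2 - 2*Pv*S + Pv^2*(S^2-Q)) = 2 + 4*Pv*q' + 2*Pv^2*q'^2 := by
    linear_combination 2*hXY - (S2+q')*hpE + (2*Pv - Pv^2*S - 2*Pv^2*S2)*hSS2 + Pv^2*hQQ2
      + (-2*Q2*q' + 2*S2^2*q')*hp3R + 2*hQ2zero
  have hu : uR * uR = 1 := by
    rw [huRdef, ← pow_add, ← two_mul, pow_mul]
    norm_num
  have hfin2 : (2 * MR) * CR = (2 * MR) * (uR * (1 + 2*Pv*q' + Pv^2*q'^2)) := by
    linear_combination uR*hE1 - 2*MR*CR*hu + uR*MR*hXfin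
  have hfinal : CR = uR * (1 + 2*Pv*q' + Pv^2*q'^2) :=
    (h2unit.mul hMunit).mul_left_cancel hfin2
  linear_combination hfinal
end
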